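/- arXiv:2004.11635 — 4 statements merged into one kernel-verified Lean document; each statement's English description precedes it below -/
import Mathlib

section
/- Let K be a non-Archimedean field and V a finite-dimensional K-vector space. Then the set of diagonalizable norms is dense in the set of all non-Archimedean norms on V for the d_∞ distance: for every non-Archimedean norm N on V and every ε > 0 there exists a diagonalizable norm N_ε on V with d_∞(N, N_ε) ≤ ε. -/
open scoped BigOperators

/-- A non-Archimedean norm on a `K`-vector space `V`. -/
def IsNAnorm (K : Type*) {V : Type*} [NormedField K] [AddCommGroup V] [Module K V]
    (N : V → ℝ) : Prop :=
  (∀ v, 0 ≤ N v) ∧ (∀ v, N v = 0 ↔ v = 0) ∧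
  (∀ (a : K) (v : V), N (a • v) = ‖a‖ * N v) ∧
  (∀ v w : V, N (v + w) ≤ max (N v) (N w))

/-- The sup-distance `d_∞` between two norms on `V`. -/
noncomputable def dInfty {V : Type*} [AddCommGroup V] (N N' : V → ℝ) : ℝ :=
  sSup {r | ∃ v : V, v ≠ 0 ∧ r = |Real.log (N' v) - Real.log (N v)|}

/-- The `i`-th relative spectral value `λᵢ(N, N')`:
the supremum, over subspaces `W ⊆ V` with `dim W ≥ i`, of
`inf_{w ∈ W ∖ {0}} (log N'(w) − log N(w))`. -/
noncomputable def specVal (K : Type*) {V : Type*} [Field K] [AddCommGroup V] [Module K V]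
    (N N' : V → ℝ) (i : ℕ) : ℝ :=
  sSup {r | ∃ W : Submodule K V, i ≤ Module.finrank K W ∧
    r = sInf {s | ∃ w ∈ W, w ≠ (0 : V) ∧ s = Real.log (N' w) - Real.log (N w)}}

/-- The relative volume `vol(N, N') = (1/d)·Σ_{i=1}^d λᵢ(N, N')`, where `d = dim V`. -/
noncomputable def relVol (K : Type*) (V : Type*) [Field K] [AddCommGroup V] [Module K V]
    (N N' : V → ℝ) : ℝ :=
  (Module.finrank K V : ℝ)⁻¹ *
    ∑ i ∈ Finset.range (Module.finrank K V), specVal K N N' (i + 1)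

/-- A norm on a finite-dimensional `K`-vector space is diagonalizable if there is a basis
`(e₁, …, e_d)` with `N(Σᵢ aᵢeᵢ) = maxᵢ |aᵢ|·N(eᵢ)` for all scalars. -/
def IsDiagonalizableNorm (K : Type*) {V : Type*} [NormedField K] [AddCommGroup V]
    [Module K V] (N : V → ℝ) : Prop :=
  ∃ b : Module.Basis (Fin (Module.finrank K V)) K V,
    ∀ a : Fin (Module.finrank K V) → K, N (∑ i, a i • b i) = ⨆ i, ‖a i‖ * N (b i)

lemma aux_sum_le {V : Type*} [AddCommGroup V] (N : V → ℝ) (h0 : N 0 = 0)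
    (hadd : ∀ v w : V, N (v + w) ≤ max (N v) (N w)) {ι : Type*} (s : Finset ι) (g : ι → V)
    (B : ℝ) (hB : 0 ≤ B) (h : ∀ i ∈ s, N (g i) ≤ B) : N (∑ i ∈ s, g i) ≤ B := by
  induction s using Finset.cons_induction with
  | empty => simpa [h0] using hB
  | cons a s ha ih =>
      rw [Finset.sum_cons]
      exact le_trans (hadd _ _) (max_le (h a (Finset.mem_cons_self _ _))
        (ih fun i hi => h i (Finset.mem_cons_of_mem hi)))


lemma aux_range_snoc {n : ℕ} {V : Type*} (f : Fin n → V) (e : V) :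
    Set.range (Fin.snoc f e : Fin (n + 1) → V) = insert e (Set.range f) := by
  ext x
  constructor
  · rintro ⟨i, rfl⟩
    refine Fin.lastCases ?_ ?_ i
    · left; rw [Fin.snoc_last]
    · intro j; right; exact ⟨j, by simp⟩
  · rintro (rfl | ⟨j, rfl⟩)
    · exact ⟨Fin.last n, Fin.snoc_last _ _⟩
    · exact ⟨j.castSucc, by simp⟩

lemma aux_hInf {K V : Type*} [NormedField K] [CompleteSpace K]
    [AddCommGroup V] [Module K V] [FiniteDimensional K V]
    (N : V → ℝ) (hN : IsNAnorm K N) (W : Submodule K V) (v : V) (hv : v ∉ W) :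
    0 < sInf {r | ∃ w ∈ W, r = N (v - w)} := by
  obtain ⟨hge0, heq, hsmul, hadd⟩ := hN
  have hsub : ∀ x y : V, N (x - y) ≤ max (N x) (N y) := by
    intro x y
    have hneg : N (-y) = N y := by
      have := hsmul (-1 : K) y
      simpa using this
    have := hadd x (-y)
    rwa [← sub_eq_add_neg, hneg] at this
  have hSne : Set.Nonempty {r | ∃ w ∈ W, r = N (v - w)} :=
    ⟨N v, 0, W.zero_mem, by rw [sub_zero]⟩
  have hpos : ∀ r ∈ {r | ∃ w ∈ W, r = N (v - w)}, 0 < r := by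
    rintro r ⟨w, hw, rfl⟩
    refine lt_of_le_of_ne (hge0 _) (Ne.symm fun h => ?_)
    have : v - w = 0 := (heq _).mp h
    exact hv (by simpa [sub_eq_zero.mp this] using hw)
  by_cases htriv : ∃ x : K, x ≠ 0 ∧ ‖x‖ ≠ 1
  · -- the norm on K is nontrivial; use completeness
    obtain ⟨x, hx0, hx1⟩ := htriv
    have hy : ∃ y : K, 1 < ‖y‖ := by
      rcases hx1.lt_or_gt with h | h
      · refine ⟨x⁻¹, ?_⟩
        rw [norm_inv]
        exact (one_lt_inv₀ (norm_pos_iff.mpr hx0)).mpr h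
      · exact ⟨x, h⟩
    letI : NontriviallyNormedField K := ⟨hy⟩
    letI : NormedAddCommGroup V :=
      AddGroupNorm.toNormedAddCommGroup
        { toFun := N
          map_zero' := (heq 0).mpr rfl
          add_le' := fun x y => le_trans (hadd x y)
            (max_le (le_add_of_nonneg_right (hge0 y)) (le_add_of_nonneg_left (hge0 x)))
          neg' := fun x => by simpa using hsmul (-1 : K) x
          eq_zero_of_map_eq_zero' := fun x h => (heq x).mp h }
    letI : NormedSpace K V := ⟨fun a b => le_of_eq (hsmul a b)⟩
    have hcl : IsClosed (W : Set V) := W.closed_of_finiteDimensional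
    have hd : 0 < Metric.infDist v (W : Set V) :=
      (hcl.notMem_iff_infDist_pos ⟨0, W.zero_mem⟩).mp hv
    refine lt_of_lt_of_le hd (le_csInf hSne ?_)
    rintro r ⟨w, hw, rfl⟩
    have : Metric.infDist v (W : Set V) ≤ dist v w := Metric.infDist_le_dist_of_mem hw
    exact le_trans this (le_of_eq (by rw [dist_eq_norm]; rfl))
  · -- the norm on K is trivial; N takes finitely many values
    push_neg at htriv
    set S := {r | ∃ w ∈ W, r = N (v - w)} with hS
    let U : ℝ → Submodule K V := fun r =>
      { carrier := {x | N x ≤ r ∨ x = 0}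
        add_mem' := by
          rintro a b (ha | rfl) (hb | rfl)
          · exact Or.inl (le_trans (hadd a b) (max_le ha hb))
          · simpa using Or.inl ha
          · simpa using Or.inl hb
          · simpa using Or.inr rfl
        zero_mem' := Or.inr rfl
        smul_mem' := by
          rintro c x (hx | rfl)
          · by_cases hc : c = 0
            · subst hc; simpa using Or.inr rfl
            · exact Or.inl (by rw [hsmul, htriv c hc, one_mul]; exact hx)
          · simpa using Or.inr rfl }
    have key : ∀ r₁ r₂, r₂ ∈ S → r₁ < r₂ →
          Module.finrank K (U r₁) < Module.finrank K (U r₂) := by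
      rintro r₁ r₂ ⟨w₂, hw₂, rfl⟩ hlt
      refine Submodule.finrank_lt_finrank_of_lt (lt_of_le_of_ne ?_ fun h => ?_)
      · rintro x (hx | rfl)
        · exact Or.inl (le_trans hx hlt.le)
        · exact Or.inr rfl
      · have hx2 : v - w₂ ∈ U (N (v - w₂)) := Or.inl le_rfl
        rw [← h] at hx2
        rcases hx2 with hx | hx
        · exact absurd hx (not_le.mpr hlt)
        · exact hv (by simpa [sub_eq_zero.mp hx] using hw₂)
    have hinj : Set.InjOn (fun r => Module.finrank K (U r)) S := by
      intro r₁ h₁ r₂ h₂ hfr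
      rcases lt_trichotomy r₁ r₂ with h | h | h
      · exact absurd hfr (ne_of_lt (key _ _ h₂ h))
      · exact h
      · exact absurd hfr.symm (ne_of_lt (key _ _ h₁ h))
    have hSfin : S.Finite := by
      refine Set.Finite.of_finite_image ?_ hinj
      refine Set.Finite.subset (Set.finite_Iic (Module.finrank K V)) ?_
      rintro m ⟨r, hr, rfl⟩
      exact Submodule.finrank_le (U r)
    have := hSne.csInf_mem hSfin
    exact hpos _ this

lemma aux_ortho {K V : Type*} [NormedField K] [AddCommGroup V] [Module K V]
    [FiniteDimensional K V] (N : V → ℝ) (hN : IsNAnorm K N)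
    (hInf : ∀ (W : Submodule K V) (v : V), v ∉ W → 0 < sInf {r | ∃ w ∈ W, r = N (v - w)}) :
    ∀ (n : ℕ) (c : ℝ), 0 < c → c < 1 → ∀ W : Submodule K V, Module.finrank K W = n →
      ∃ f : Fin n → V, Submodule.span K (Set.range f) = W ∧
        ∀ (a : Fin n → K) (i : Fin n), c * (‖a i‖ * N (f i)) ≤ N (∑ j, a j • f j) := by
  obtain ⟨hge0, heq, hsmul, hadd⟩ := hN
  intro n
  induction n with
  | zero =>
      intro c hc hc1 W hW
      refine ⟨Fin.elim0, ?_, fun a i => i.elim0⟩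
      rw [Set.range_eq_empty, Submodule.span_empty]
      exact (Submodule.finrank_eq_zero.mp hW).symm
  | succ n IH =>
      intro c hc hc1 W hW
      set s := Real.sqrt c with hs_def
      have hss : s * s = c := Real.mul_self_sqrt hc.le
      have hs0 : 0 < s := Real.sqrt_pos.mpr hc
      have hs1 : s < 1 := by nlinarith
      have hcs : c ≤ s := by nlinarith
      -- a basis of W
      let bw := Module.finBasisOfFinrankEq K W hW
      let F : Fin (n + 1) → V := fun i => (bw i : V)
      have hFli : LinearIndependent K F :=
        bw.linearIndependent.map' W.subtype W.ker_subtype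
      let g : Fin n → V := fun i => F i.castSucc
      let v : V := F (Fin.last n)
      set W' := Submodule.span K (Set.range g) with hW'def
      have hg_li : LinearIndependent K g :=
        hFli.comp Fin.castSucc (Fin.castSucc_injective n)
      have hW'rank : Module.finrank K W' = n := by
        rw [hW'def, finrank_span_eq_card hg_li, Fintype.card_fin]
      have hvW' : v ∉ W' := by
        have hrg : Set.range g = F '' Set.range Fin.castSucc := by
          rw [← Set.range_comp]; rfl
        have hlast : Fin.last n ∉ Set.range (Fin.castSucc : Fin n → Fin (n + 1)) := by
          rintro ⟨j, hj⟩
          exact (Fin.castSucc_lt_last j).ne hj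
        have := hFli.notMem_span_image hlast
        rwa [hW'def, hrg]
      have hmemW : ∀ i, F i ∈ W := fun i => (bw i).2
      have hW'le : W' ≤ W := by
        rw [hW'def, Submodule.span_le]
        rintro _ ⟨i, rfl⟩
        exact hmemW i.castSucc
      have hvW : v ∈ W := hmemW (Fin.last n)
      have hWsplit : W' ⊔ Submodule.span K {v} = W := by
        apply le_antisymm
        · exact sup_le hW'le (by rw [Submodule.span_le, Set.singleton_subset_iff]; exact hvW)
        · have hWspan : W = Submodule.span K (Set.range F) := by
            conv_lhs => rw [← Submodule.map_subtype_top W]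
            rw [← bw.span_eq, Submodule.map_span]
            congr 1
            rw [← Set.range_comp]
            rfl
          rw [hWspan, Submodule.span_le]
          rintro _ ⟨i, rfl⟩
          refine Fin.lastCases ?_ ?_ i
          · exact Submodule.mem_sup_right (Submodule.mem_span_singleton_self v)
          · intro j
            exact Submodule.mem_sup_left (Submodule.subset_span ⟨j, rfl⟩)
      obtain ⟨f', hspan', hbound'⟩ := IH s hs0 hs1 W' hW'rank
      set S := {r | ∃ w ∈ W', r = N (v - w)} with hSdef
      have hδ : 0 < sInf S := hInf W' v hvW'
      set δ := sInf S with hδdef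
      have hSne : S.Nonempty := ⟨N v, 0, W'.zero_mem, by rw [sub_zero]⟩
      have hSbdd : BddBelow S := ⟨0, by rintro r ⟨w, hw, rfl⟩; exact hge0 _⟩
      have hlt : δ < δ / s := by
        rw [lt_div_iff₀ hs0]; nlinarith
      obtain ⟨r0, hr0S, hr0⟩ := exists_lt_of_csInf_lt hSne hlt
      obtain ⟨w0, hw0, rfl⟩ := hr0S
      set e := v - w0 with he_def
      have hδle : ∀ w ∈ W', δ ≤ N (v - w) := fun w hw => csInf_le hSbdd ⟨w, hw, rfl⟩
      have heW : e ∈ W := sub_mem hvW (hW'le hw0)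
      refine ⟨Fin.snoc f' e, ?_, ?_⟩
      · -- span
        rw [aux_range_snoc, Submodule.span_insert, hspan']
        apply le_antisymm
        · exact sup_le (by rw [Submodule.span_le, Set.singleton_subset_iff]; exact heW) hW'le
        · rw [← hWsplit]
          refine sup_le (le_sup_right) ?_
          rw [Submodule.span_le, Set.singleton_subset_iff]
          have hveq : v = w0 + e := by rw [he_def]; abel
          rw [hveq]
          exact add_mem (Submodule.mem_sup_right hw0)
            (Submodule.mem_sup_left (Submodule.mem_span_singleton_self e))
      · -- bound
        intro a i
        set fsn : Fin (n + 1) → V := Fin.snoc f' e with hfsn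
        have hsum : ∑ j, a j • fsn j
            = (∑ j : Fin n, a j.castSucc • f' j) + a (Fin.last n) • e := by
          rw [Fin.sum_univ_castSucc]
          simp [hfsn]
        set t := a (Fin.last n) with ht_def
        set v' := ∑ j : Fin n, a j.castSucc • f' j with hv'def
        have hv'W' : v' ∈ W' := by
          rw [← hspan']
          exact Submodule.sum_mem _ fun j _ =>
            Submodule.smul_mem _ _ (Submodule.subset_span ⟨j, rfl⟩)
        have hIH : ∀ j : Fin n, s * (‖a j.castSucc‖ * N (f' j)) ≤ N v' :=
          fun j => hbound' (fun k => a k.castSucc) j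
        by_cases ht : t = 0
        · have hsum0 : ∑ j, a j • fsn j = v' := by
            rw [hsum, ht, zero_smul, add_zero]
          rw [hsum0]
          refine Fin.lastCases ?_ ?_ i
          · rw [← ht_def, ht]
            simpa [hfsn] using hge0 v'
          · intro j
            have h1 := hIH j
            have h2 : c * (‖a j.castSucc‖ * N (f' j)) ≤ s * (‖a j.castSucc‖ * N (f' j)) :=
              mul_le_mul_of_nonneg_right hcs (mul_nonneg (norm_nonneg _) (hge0 _))
            simpa [hfsn] using le_trans h2 h1
        · have htn : 0 < ‖t‖ := norm_pos_iff.mpr ht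
          have hkey : ‖t‖ * δ ≤ N (∑ j, a j • fsn j) := by
            rw [hsum]
            have h1 : t • (t⁻¹ • v') = v' := smul_inv_smul₀ ht v'
            have hrw : v' + t • e = t • (v - (w0 - t⁻¹ • v')) := by
              simp only [he_def, smul_sub, h1]
              abel
            rw [hrw, hsmul]
            exact mul_le_mul_of_nonneg_left
              (hδle _ (sub_mem hw0 (Submodule.smul_mem _ _ hv'W'))) (norm_nonneg t)
          have hNe : N e < δ / s := hr0
          have hNsum0 : 0 ≤ N (∑ j, a j • fsn j) := hge0 _
          refine Fin.lastCases ?_ ?_ i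
          · -- i = last
            have h1 : c * (‖t‖ * N e) ≤ c * (‖t‖ * (δ / s)) :=
              mul_le_mul_of_nonneg_left
                (mul_le_mul_of_nonneg_left hNe.le (norm_nonneg t)) hc.le
            have h2 : c * (‖t‖ * (δ / s)) = s * (‖t‖ * δ) := by
              field_simp
              nlinarith [hss]
            have h3 : s * (‖t‖ * δ) ≤ ‖t‖ * δ := by
              nlinarith [mul_nonneg (norm_nonneg t) hδ.le]
            have : c * (‖t‖ * N e) ≤ N (∑ j, a j • fsn j) := by
              rw [h2] at h1
              exact le_trans h1 (le_trans h3 hkey)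
            simpa [hfsn, ← ht_def] using this
          · intro j
            have hNv' : N v' ≤ N (∑ j, a j • fsn j) / s := by
              have hsplit : v' = (∑ j, a j • fsn j) + (-1 : K) • (t • e) := by
                rw [hsum]
                simp
              have hneg : N ((-1 : K) • (t • e)) = N (t • e) := by
                rw [hsmul]; simp
              have h4 : N v' ≤ max (N (∑ j, a j • fsn j)) (N (t • e)) := by
                rw [hsplit]
                exact le_trans (hadd _ _) (by rw [hneg])
              have h5 : N (t • e) ≤ N (∑ j, a j • fsn j) / s := by
                rw [hsmul]
                have : ‖t‖ * N e ≤ ‖t‖ * (δ / s) :=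
                  mul_le_mul_of_nonneg_left hNe.le (norm_nonneg t)
                refine le_trans this ?_
                calc ‖t‖ * (δ / s) = (‖t‖ * δ) / s := by ring
                  _ ≤ N (∑ j, a j • fsn j) / s :=
                    (div_le_div_iff_of_pos_right hs0).mpr hkey
              have h6 : N (∑ j, a j • fsn j)
                  ≤ N (∑ j, a j • fsn j) / s := by
                rw [le_div_iff₀ hs0]
                nlinarith
              exact le_trans h4 (max_le h6 h5)
            have h7 : s * (s * (‖a j.castSucc‖ * N (f' j))) ≤ s * N v' :=
              mul_le_mul_of_nonneg_left (hIH j) hs0.le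
            have h8 : s * N v' ≤ s * (N (∑ j, a j • fsn j) / s) :=
              mul_le_mul_of_nonneg_left hNv' hs0.le
            have h9 : s * (N (∑ j, a j • fsn j) / s)
                = N (∑ j, a j • fsn j) := by
              field_simp
            have : c * (‖a j.castSucc‖ * N (f' j)) ≤ N (∑ j, a j • fsn j) := by
              rw [← hss, mul_assoc]
              rw [h9] at h8
              exact le_trans h7 h8
            simpa [hfsn] using this

/-- Diagonalizable norms are dense in the space of all non-Archimedean norms on a
finite-dimensional vector space, for the `d_∞` distance. -/
theorem diagonalizable_dense
    (K V : Type*) [NormedField K] [IsUltrametricDist K] [CompleteSpace K]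
    [AddCommGroup V] [Module K V] [FiniteDimensional K V]
    (N : V → ℝ) (hN : IsNAnorm K N) :
    ∀ ε : ℝ, 0 < ε → ∃ Nε : V → ℝ, IsNAnorm K Nε ∧ IsDiagonalizableNorm K Nε ∧
      dInfty N Nε ≤ ε := by
  intro ε hε
  obtain ⟨hge0, heq, hsmul, hadd⟩ := hN
  by_cases hd : Module.finrank K V = 0
  · -- trivial case : V = 0
    haveI : Subsingleton V := Module.finrank_zero_iff.mp hd
    haveI : IsEmpty (Fin (Module.finrank K V)) := by rw [hd]; infer_instance
    refine ⟨N, ⟨hge0, heq, hsmul, hadd⟩, ⟨Module.finBasis K V, fun a => ?_⟩, ?_⟩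
    · rw [Finset.univ_eq_empty, Finset.sum_empty, (heq 0).mpr rfl, Real.iSup_of_isEmpty]
    · refine Real.sSup_le ?_ hε.le
      rintro r ⟨v, hv, rfl⟩
      exact absurd (Subsingleton.elim v 0) hv
  · -- main case
    haveI : Nonempty (Fin (Module.finrank K V)) := ⟨⟨0, Nat.pos_of_ne_zero hd⟩⟩
    have hInf := aux_hInf N ⟨hge0, heq, hsmul, hadd⟩
    set c := Real.exp (-ε) with hc_def
    have hc0 : 0 < c := Real.exp_pos _
    have hc1 : c < 1 := by
      calc c < Real.exp 0 := Real.exp_lt_exp.mpr (by linarith)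
        _ = 1 := Real.exp_zero
    obtain ⟨f, hfspan, hfbound⟩ := aux_ortho N ⟨hge0, heq, hsmul, hadd⟩ hInf
      (Module.finrank K V) c hc0 hc1 ⊤ (finrank_top K V)
    have hble : ⊤ ≤ Submodule.span K (Set.range f) := hfspan.ge
    let b : Module.Basis (Fin (Module.finrank K V)) K V :=
      basisOfTopLeSpanOfCardEqFinrank f hble (Fintype.card_fin _)
    have hb : ⇑b = f := coe_basisOfTopLeSpanOfCardEqFinrank f hble (Fintype.card_fin _)
    set Nε : V → ℝ := fun v => ⨆ i, ‖b.repr v i‖ * N (b i) with hNε_def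
    have hbdd : ∀ v : V, BddAbove (Set.range fun i => ‖b.repr v i‖ * N (b i)) :=
      fun v => (Set.finite_range _).bddAbove
    have hNε_nonneg : ∀ v, 0 ≤ Nε v :=
      fun v => Real.iSup_nonneg fun i => mul_nonneg (norm_nonneg _) (hge0 _)
    have hle : ∀ v, N v ≤ Nε v := by
      intro v
      conv_lhs => rw [← b.sum_repr v]
      exact aux_sum_le N ((heq 0).mpr rfl) hadd Finset.univ _ _ (hNε_nonneg v)
        (fun i _ => by rw [hsmul]; exact le_ciSup (hbdd v) i)
    have hge : ∀ v, c * Nε v ≤ N v := by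
      intro v
      have h1 : ∀ i, ‖b.repr v i‖ * N (b i) ≤ c⁻¹ * N v := by
        intro i
        rw [le_inv_mul_iff₀ hc0]
        have h2 := hfbound (fun j => b.repr v j) i
        rw [← hb] at h2
        simpa [b.sum_repr v] using h2
      have h3 : Nε v ≤ c⁻¹ * N v := ciSup_le h1
      calc c * Nε v ≤ c * (c⁻¹ * N v) := mul_le_mul_of_nonneg_left h3 hc0.le
        _ = N v := by field_simp
    have hNpos : ∀ v : V, v ≠ 0 → 0 < N v := fun v hv =>
      lt_of_le_of_ne (hge0 v) (Ne.symm fun h => hv ((heq v).mp h))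
    have hNεpos : ∀ v : V, v ≠ 0 → 0 < Nε v := fun v hv =>
      lt_of_lt_of_le (hNpos v hv) (hle v)
    have hNεb : ∀ i, Nε (b i) = N (b i) := by
      intro i
      apply le_antisymm
      · apply ciSup_le
        intro j
        rcases eq_or_ne j i with rfl | hji
        · rw [b.repr_self, Finsupp.single_eq_same, norm_one, one_mul]
        · rw [b.repr_self, Finsupp.single_eq_of_ne hji, norm_zero, zero_mul]
          exact hge0 _
      · refine le_trans ?_ (le_ciSup (hbdd (b i)) i)
        rw [b.repr_self, Finsupp.single_eq_same, norm_one, one_mul]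
    refine ⟨Nε, ⟨hNε_nonneg, ?_, ?_, ?_⟩, ⟨b, ?_⟩, ?_⟩
    · -- eq zero iff
      intro v
      constructor
      · intro h
        by_contra hv
        exact absurd h (ne_of_gt (hNεpos v hv))
      · rintro rfl
        show (⨆ i, ‖b.repr (0 : V) i‖ * N (b i)) = 0
        simp only [map_zero, Finsupp.coe_zero, Pi.zero_apply, norm_zero, zero_mul]
        exact ciSup_const
    · -- smul
      intro a v
      have hEq : Nε (a • v) = ⨆ i, ‖a‖ * (‖b.repr v i‖ * N (b i)) := by
        show (⨆ i, ‖b.repr (a • v) i‖ * N (b i)) = _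
        congr 1
        ext i
        rw [map_smul, Finsupp.smul_apply, smul_eq_mul, norm_mul, mul_assoc]
      rw [hEq, ← Real.mul_iSup_of_nonneg (norm_nonneg a)]
    · -- add
      intro v w
      refine ciSup_le fun i => ?_
      have h1 : ‖b.repr (v + w) i‖ ≤ max ‖b.repr v i‖ ‖b.repr w i‖ := by
        rw [map_add, Finsupp.add_apply]
        exact IsUltrametricDist.norm_add_le_max _ _
      calc ‖b.repr (v + w) i‖ * N (b i)
          ≤ max ‖b.repr v i‖ ‖b.repr w i‖ * N (b i) :=
            mul_le_mul_of_nonneg_right h1 (hge0 _)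
        _ = max (‖b.repr v i‖ * N (b i)) (‖b.repr w i‖ * N (b i)) :=
            max_mul_of_nonneg _ _ (hge0 _)
        _ ≤ max (Nε v) (Nε w) :=
            max_le_max (le_ciSup (hbdd v) i) (le_ciSup (hbdd w) i)
    · -- diagonalizable
      intro a
      have hrepr : ⇑(b.repr (∑ i, a i • b i)) = a := b.repr_sum_self a
      have hL : Nε (∑ i, a i • b i) = ⨆ i, ‖a i‖ * N (b i) := by
        show (⨆ i, ‖b.repr (∑ i, a i • b i) i‖ * N (b i)) = _
        rw [hrepr]
      rw [hL]
      exact iSup_congr fun i => by rw [hNεb i]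
    · -- distance
      refine Real.sSup_le ?_ hε.le
      rintro r ⟨v, hv, rfl⟩
      have h1 : Real.log (N v) ≤ Real.log (Nε v) := Real.log_le_log (hNpos v hv) (hle v)
      have h2 : Real.log (Nε v) ≤ Real.log (N v) + ε := by
        have h3 : Nε v ≤ c⁻¹ * N v := by
          rw [le_inv_mul_iff₀ hc0]; exact hge v
        calc Real.log (Nε v) ≤ Real.log (c⁻¹ * N v) :=
              Real.log_le_log (hNεpos v hv) h3
          _ = Real.log c⁻¹ + Real.log (N v) :=
              Real.log_mul (by positivity) (ne_of_gt (hNpos v hv))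
          _ = Real.log (N v) + ε := by
              rw [Real.log_inv, hc_def, Real.log_exp]; ring
      rw [abs_of_nonneg (by linarith)]
      linarith
end

section
/- Let L/K be an isometric extension of non-Archimedean fields, V a finite-dimensional K-vector space, and N a non-Archimedean norm on V. Then the ground field extension N_L, defined on V_L = L ⊗_K V by N_L(w) = inf over all representations w = Σⱼ aⱼ ⊗ vⱼ (aⱼ ∈ L, vⱼ ∈ V) of maxⱼ |aⱼ|·N(vⱼ), is a non-Archimedean norm on the L-vector space V_L (in particular N_L(w) > 0 for every w ≠ 0), and it extends N: N_L(1 ⊗ v) = N(v) for all v ∈ V. -/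
open scoped BigOperators

/-- ultrametric bound for finite sums -/
lemma naSum {V : Type*} [AddCommGroup V] (N : V → ℝ) (h0 : N 0 = 0)
    (hadd : ∀ a b, N (a + b) ≤ max (N a) (N b)) {ι : Type*} (s : Finset ι) (f : ι → V) {C : ℝ}
    (hC : 0 ≤ C) (h : ∀ i ∈ s, N (f i) ≤ C) : N (∑ i ∈ s, f i) ≤ C := by
  classical
  induction s using Finset.cons_induction with
  | empty => simpa [h0] using hC
  | cons a s ha ih =>
    rw [Finset.sum_cons]
    exact (hadd _ _).trans (max_le (h a (Finset.mem_cons_self a s))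
      (ih fun i hi => h i (Finset.mem_cons_of_mem hi)))

lemma mul_sup'' {ι : Type*} {s : Finset ι} (H : s.Nonempty) (f : ι → ℝ) {c : ℝ} (hc : 0 ≤ c) :
    c * s.sup' H f = s.sup' H fun j => c * f j :=
  Finset.comp_sup'_eq_sup'_comp H (fun x => c * x) (fun x y => mul_max_of_nonneg x y hc)

lemma exists_pos_dist {K V : Type*} [NormedField K] [CompleteSpace K] [AddCommGroup V]
    [Module K V] (N : V → ℝ) (hN : IsNAnorm K N) {n : ℕ} (e : Fin n → V) {α : ℝ} (hα : 0 < α)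
    (hNe : ∀ i, 0 < N (e i))
    (horth : ∀ (x : Fin n → K) (i : Fin n), α * (‖x i‖ * N (e i)) ≤ N (∑ j, x j • e j))
    {v : V} (hv : v ∉ Submodule.span K (Set.range e)) :
    ∃ δ > 0, ∀ x : Fin n → K, δ ≤ N (v - ∑ i, x i • e i) := by
  obtain ⟨hN1, hN2, hN3, hN4⟩ := hN
  have h0 : N 0 = 0 := (hN2 0).mpr rfl
  have hneg : ∀ x, N (-x) = N x := fun x => by
    have := hN3 (-1 : K) x
    simpa [norm_neg, norm_one] using this
  have hsub : ∀ a b, N (a - b) ≤ max (N a) (N b) := fun a b => by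
    rw [sub_eq_add_neg]
    exact (hN4 a (-b)).trans (by rw [hneg])
  by_contra hcon
  push_neg at hcon
  have hex : ∀ k : ℕ, ∃ x : Fin n → K, N (v - ∑ i, x i • e i) < 1 / (k + 1) :=
    fun k => hcon _ (by positivity)
  choose u hu using hex
  have hdiff : ∀ k l (i : Fin n), α * (‖u k i - u l i‖ * N (e i)) ≤
      max (1 / ((k:ℝ) + 1)) (1 / ((l:ℝ) + 1)) := by
    intro k l i
    have e1 : (∑ j, (u k j - u l j) • e j) =
        (v - ∑ j, u l j • e j) - (v - ∑ j, u k j • e j) := by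
      simp only [sub_smul, Finset.sum_sub_distrib]
      abel
    refine (horth (fun j => u k j - u l j) i).trans ?_
    rw [e1]
    exact (hsub _ _).trans (max_le ((hu l).le.trans (le_max_right _ _))
      ((hu k).le.trans (le_max_left _ _)))
  have hcau : ∀ i : Fin n, ∃ y : K, Filter.Tendsto (fun k => u k i) Filter.atTop (nhds y) := by
    intro i
    have hpos : 0 < α * N (e i) := mul_pos hα (hNe i)
    apply cauchySeq_tendsto_of_complete
    apply cauchySeq_of_le_tendsto_0 (fun M : ℕ => (α * N (e i))⁻¹ * (1 / (M + 1)))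
    · intro k l M hk hl
      rw [dist_eq_norm]
      have h2 : α * N (e i) * ‖u k i - u l i‖ ≤ 1 / (M + 1) := by
        have h3 := hdiff k l i
        have hmax : max (1 / ((k : ℝ) + 1)) (1 / ((l : ℝ) + 1)) ≤ 1 / ((M : ℝ) + 1) := by
          apply max_le <;> apply one_div_le_one_div_of_le (by positivity)
          · have : (M : ℝ) ≤ k := Nat.cast_le.mpr hk
            linarith
          · have : (M : ℝ) ≤ l := Nat.cast_le.mpr hl
            linarith
        calc α * N (e i) * ‖u k i - u l i‖ = α * (‖u k i - u l i‖ * N (e i)) := by ring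
          _ ≤ _ := h3.trans hmax
      calc ‖u k i - u l i‖ = (α * N (e i))⁻¹ * (α * N (e i) * ‖u k i - u l i‖) := by
            rw [inv_mul_cancel_left₀ hpos.ne']
        _ ≤ (α * N (e i))⁻¹ * (1 / (M + 1)) :=
            mul_le_mul_of_nonneg_left h2 (by positivity)
    · simpa using tendsto_one_div_add_atTop_nhds_zero_nat.const_mul ((α * N (e i))⁻¹)
  choose y hy using hcau
  set w : V := ∑ i, y i • e i with hw
  have hvw : ∀ ε > (0 : ℝ), N (v - w) ≤ ε := by
    intro ε hε
    have h1 : ∀ᶠ k in Filter.atTop, ∀ i, ‖u k i - y i‖ * N (e i) < ε := by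
      rw [Filter.eventually_all]
      intro i
      have ht : Filter.Tendsto (fun k => ‖u k i - y i‖ * N (e i)) Filter.atTop
          (nhds (0 * N (e i))) :=
        Filter.Tendsto.mul_const _ (tendsto_iff_norm_sub_tendsto_zero.mp (hy i))
      rw [zero_mul] at ht
      exact ht.eventually_lt_const hε
    have h2 : ∀ᶠ k : ℕ in Filter.atTop, 1 / ((k : ℝ) + 1) < ε :=
      tendsto_one_div_add_atTop_nhds_zero_nat.eventually_lt_const hε
    obtain ⟨k, hk1, hk2⟩ := (h1.and h2).exists
    have e1 : v - w = (v - ∑ i, u k i • e i) + ∑ i, (u k i - y i) • e i := by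
      simp only [sub_smul, Finset.sum_sub_distrib, hw]
      abel
    rw [e1]
    refine (hN4 _ _).trans (max_le ((hu k).le.trans hk2.le) ?_)
    exact naSum N h0 hN4 _ _ hε.le fun i _ => by rw [hN3]; exact (hk1 i).le
  have hz : N (v - w) ≤ 0 := by
    by_contra h'
    push_neg at h'
    linarith [hvw (N (v - w) / 2) (by linarith)]
  have : v = w := sub_eq_zero.mp ((hN2 _).mp (le_antisymm hz (hN1 _)))
  exact hv (this ▸ Submodule.sum_mem _ fun i _ =>
    Submodule.smul_mem _ _ (Submodule.subset_span ⟨i, rfl⟩))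

lemma exists_orth {K V : Type*} [NormedField K] [CompleteSpace K] [AddCommGroup V]
    [Module K V] [FiniteDimensional K V] (N : V → ℝ) (hN : IsNAnorm K N) :
    ∀ (n : ℕ) (W : Submodule K V), Module.finrank K W = n → ∀ α : ℝ, 0 < α → α < 1 →
    ∃ e : Fin n → V, (∀ i, e i ∈ W) ∧ W ≤ Submodule.span K (Set.range e) ∧
      (∀ i, e i ≠ 0) ∧
      ∀ (x : Fin n → K) (i : Fin n), α * (‖x i‖ * N (e i)) ≤ N (∑ j, x j • e j) := by
  obtain ⟨hN1, hN2, hN3, hN4⟩ := hN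
  have h0 : N 0 = 0 := (hN2 0).mpr rfl
  have hneg : ∀ x, N (-x) = N x := fun x => by
    have := hN3 (-1 : K) x
    simpa [norm_neg, norm_one] using this
  have hsub : ∀ a b, N (a - b) ≤ max (N a) (N b) := fun a b => by
    rw [sub_eq_add_neg]
    exact (hN4 a (-b)).trans (by rw [hneg])
  have hNpos : ∀ u : V, u ≠ 0 → 0 < N u := fun u hu =>
    (hN1 u).lt_of_ne fun h => hu ((hN2 u).mp h.symm)
  intro n
  induction n with
  | zero =>
    intro W hW α _ _
    refine ⟨Fin.elim0, fun i => i.elim0, ?_, fun i => i.elim0, fun x i => i.elim0⟩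
    have : W = ⊥ := Submodule.finrank_eq_zero.mp hW
    rw [this]
    exact bot_le
  | succ n ih =>
    intro W hW α hα0 hα1
    set β := Real.sqrt α with hβ
    have hβ0 : 0 < β := Real.sqrt_pos.mpr hα0
    have hβ1 : β < 1 := by
      rw [hβ, show (1 : ℝ) = Real.sqrt 1 by simp]
      exact Real.sqrt_lt_sqrt hα0.le hα1
    have hββ : β * β = α := Real.mul_self_sqrt hα0.le
    have hαβ : α ≤ β := by nlinarith
    -- a basis of W
    let b : Module.Basis (Fin (n + 1)) K W := Module.finBasisOfFinrankEq K W hW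
    have hli : LinearIndependent K fun i => (b i : V) :=
      b.linearIndependent.map' W.subtype (Submodule.ker_subtype W)
    set f : Fin n → V := fun i => (b i.castSucc : V) with hf
    set v : V := (b (Fin.last n) : V) with hvdef
    set W' : Submodule K V := Submodule.span K (Set.range f) with hW'
    have hW'W : W' ≤ W := Submodule.span_le.mpr (by rintro - ⟨i, rfl⟩; exact (b i.castSucc).2)
    have hlif : LinearIndependent K f := hli.comp _ (Fin.castSucc_injective n)
    have hfrank : Module.finrank K W' = n := by
      rw [hW', finrank_span_eq_card hlif, Fintype.card_fin]
    have hvW' : v ∉ W' := by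
      have h1 : v ∉ Submodule.span K ((fun i => (b i : V)) '' (Set.range Fin.castSucc)) := by
        apply hli.notMem_span_image
        simp only [Set.mem_range, not_exists]
        exact fun i => (Fin.castSucc_lt_last i).ne
      rwa [← Set.range_comp, show ((fun i => (b i : V)) ∘ Fin.castSucc) = f from rfl] at h1
    obtain ⟨e', he'W, he'span, he'ne, horth'⟩ := ih W' hfrank β hβ0 hβ1
    have hNe' : ∀ i, 0 < N (e' i) := fun i => hNpos _ (he'ne i)
    have hspe : Submodule.span K (Set.range e') = W' := le_antisymm
      (Submodule.span_le.mpr (by rintro - ⟨i, rfl⟩; exact he'W i)) he'span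
    have hv' : v ∉ Submodule.span K (Set.range e') := by rwa [hspe]
    obtain ⟨δ, hδ, hdist⟩ := exists_pos_dist N ⟨hN1, hN2, hN3, hN4⟩ e' hβ0 hNe' horth' hv'
    -- nearly optimal approximation
    obtain ⟨x₀, hx₀⟩ : ∃ x₀ : Fin n → K, ∀ x : Fin n → K,
        β * N (v - ∑ i, x₀ i • e' i) ≤ N (v - ∑ i, x i • e' i) := by
      set S := Set.range (fun x : Fin n → K => N (v - ∑ i, x i • e' i)) with hS
      have hne : S.Nonempty := ⟨_, ⟨0, rfl⟩⟩
      have hbdd : BddBelow S := ⟨0, by rintro r ⟨x, rfl⟩; exact hN1 _⟩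
      have hδle : δ ≤ sInf S := le_csInf hne (by rintro r ⟨x, rfl⟩; exact hdist x)
      have h0S : 0 < sInf S := hδ.trans_le hδle
      have hlt : sInf S < β⁻¹ * sInf S :=
        lt_mul_of_one_lt_left h0S ((one_lt_inv₀ hβ0).mpr hβ1)
      obtain ⟨r, ⟨x₀, hx₀⟩, hr⟩ := exists_lt_of_csInf_lt hne hlt
      refine ⟨x₀, fun x => ?_⟩
      have h2 : sInf S ≤ N (v - ∑ i, x i • e' i) := csInf_le hbdd ⟨x, rfl⟩
      have h3 : N (v - ∑ i, x₀ i • e' i) < β⁻¹ * sInf S := by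
        rw [← hx₀] at hr; exact hr
      have h4 : β * N (v - ∑ i, x₀ i • e' i) < sInf S := by
        have := mul_lt_mul_of_pos_left h3 hβ0
        rwa [mul_inv_cancel_left₀ hβ0.ne'] at this
      linarith
    set en : V := v - ∑ i, x₀ i • e' i with hen
    have henW' : ∀ x : Fin n → K, β * N en ≤ N (en + ∑ i, x i • e' i) := by
      intro x
      have h1 := hx₀ (fun i => x₀ i - x i)
      have h2 : v - ∑ i, (x₀ i - x i) • e' i = en + ∑ i, x i • e' i := by
        simp only [sub_smul, Finset.sum_sub_distrib, hen]
        abel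
      rwa [h2] at h1
    have hen0 : en ≠ 0 := by
      intro h
      apply hv'
      have : v = ∑ i, x₀ i • e' i := by rwa [hen, sub_eq_zero] at h
      exact this ▸ Submodule.sum_mem _ fun i _ =>
        Submodule.smul_mem _ _ (Submodule.subset_span ⟨i, rfl⟩)
    have henpos : 0 < N en := hNpos _ hen0
    -- the new family
    refine ⟨Fin.snoc e' en, ?_, ?_, ?_, ?_⟩
    · intro i
      refine Fin.lastCases ?_ (fun j => ?_) i
      · rw [Fin.snoc_last, hen]
        exact Submodule.sub_mem _ (b _).2 (Submodule.sum_mem _ fun j _ =>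
          Submodule.smul_mem _ _ (hW'W (he'W j)))
      · rw [Fin.snoc_castSucc]
        exact hW'W (he'W j)
    · -- W ≤ span
      have hrsub : Set.range e' ⊆ Set.range (Fin.snoc e' en : Fin (n + 1) → V) := by
        rintro - ⟨i, rfl⟩
        exact ⟨i.castSucc, Fin.snoc_castSucc ..⟩
      have hW'sp : W' ≤ Submodule.span K (Set.range (Fin.snoc e' en : Fin (n + 1) → V)) :=
        he'span.trans (Submodule.span_mono hrsub)
      have hvsp : v ∈ Submodule.span K (Set.range (Fin.snoc e' en : Fin (n + 1) → V)) := by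
        have h1 : v = en + ∑ i, x₀ i • e' i := by rw [hen]; abel
        rw [h1]
        exact Submodule.add_mem _
          (Submodule.subset_span ⟨Fin.last n, Fin.snoc_last ..⟩)
          (hW'sp (Submodule.sum_mem _ fun i _ =>
            Submodule.smul_mem _ _ (he'W i)))
      have hWeq : Submodule.span K (Set.range fun i => (b i : V)) = W := by
        have h2 := congrArg (Submodule.map W.subtype) b.span_eq
        rwa [Submodule.map_span, Submodule.map_top, Submodule.range_subtype,
          ← Set.range_comp] at h2
      rw [← hWeq]
      apply Submodule.span_le.mpr
      rintro - ⟨i, rfl⟩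
      refine Fin.lastCases ?_ (fun j => ?_) i
      · exact hvsp
      · exact hW'sp (Submodule.subset_span ⟨j, rfl⟩)
    · intro i
      refine Fin.lastCases ?_ (fun j => ?_) i
      · rw [Fin.snoc_last]; exact hen0
      · rw [Fin.snoc_castSucc]; exact he'ne j
    · intro x i
      have hsum : ∑ j, x j • Fin.snoc e' en j =
          (∑ j : Fin n, x j.castSucc • e' j) + x (Fin.last n) • en := by
        rw [Fin.sum_univ_castSucc]
        simp [Fin.snoc_castSucc, Fin.snoc_last]
      set c : K := x (Fin.last n) with hc
      set w : V := ∑ j : Fin n, x j.castSucc • e' j with hwdef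
      -- F1 : for c ≠ 0, β * (‖c‖ * N en) ≤ N (w + c • en)
      have hF1 : c ≠ 0 → β * (‖c‖ * N en) ≤ N (w + c • en) := by
        intro hc0
        have h1 : c • (c⁻¹ • w + en) = w + c • en := by
          rw [smul_add, smul_smul, mul_inv_cancel₀ hc0, one_smul]
        have h2 : c⁻¹ • w = ∑ i, (c⁻¹ * x i.castSucc) • e' i := by
          rw [hwdef, Finset.smul_sum]
          exact Finset.sum_congr rfl fun i _ => smul_smul ..
        have h3 := henW' (fun i => c⁻¹ * x i.castSucc)
        rw [← h2] at h3
        have h4 : N (c • (c⁻¹ • w + en)) = ‖c‖ * N (c⁻¹ • w + en) := hN3 ..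
        rw [h1] at h4
        calc β * (‖c‖ * N en) = ‖c‖ * (β * N en) := by ring
          _ ≤ ‖c‖ * N (en + c⁻¹ • w) := mul_le_mul_of_nonneg_left h3 (norm_nonneg _)
          _ = ‖c‖ * N (c⁻¹ • w + en) := by rw [add_comm]
          _ = N (w + c • en) := h4.symm
      -- F2 : β * N w ≤ N (w + c • en)
      have hF2 : β * N w ≤ N (w + c • en) := by
        rcases eq_or_ne c 0 with hc0 | hc0
        · rw [hc0, zero_smul, add_zero]
          nlinarith [hN1 w]
        · have h1 : N w ≤ max (N (w + c • en)) (N (c • en)) := by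
            have h1' := hsub (w + c • en) (c • en)
            simpa using h1'
          have h2 : β * N (c • en) ≤ N (w + c • en) := by
            rw [hN3]; exact hF1 hc0
          have h3 : β * N (w + c • en) ≤ N (w + c • en) := by
            nlinarith [hN1 (w + c • en)]
          have h4 : β * N w ≤ β * max (N (w + c • en)) (N (c • en)) :=
            mul_le_mul_of_nonneg_left h1 hβ0.le
          rw [mul_max_of_nonneg _ _ hβ0.le] at h4
          exact h4.trans (max_le h3 h2)
      rw [hsum]
      refine Fin.lastCases ?_ (fun j => ?_) i
      · rw [Fin.snoc_last, ← hc]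
        rcases eq_or_ne c 0 with hc0 | hc0
        · rw [hc0]
          simp only [norm_zero, zero_mul, mul_zero]
          exact hN1 _
        · refine le_trans ?_ (hF1 hc0)
          exact mul_le_mul_of_nonneg_right hαβ (mul_nonneg (norm_nonneg c) (hN1 _))
      · rw [Fin.snoc_castSucc]
        have h1 : β * (‖x j.castSucc‖ * N (e' j)) ≤ N w := horth' (fun k => x k.castSucc) j
        calc α * (‖x j.castSucc‖ * N (e' j)) = β * (β * (‖x j.castSucc‖ * N (e' j))) := by
              rw [← hββ]; ring
          _ ≤ β * N w := mul_le_mul_of_nonneg_left h1 hβ0.le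
          _ ≤ N (w + c • en) := hF2

open scoped TensorProduct
open scoped Pointwise

/-- The ground field extension of a norm `N` on `V` to `V_L = L ⊗_K V`:
`N_L(w) = inf` over all representations `w = Σⱼ aⱼ ⊗ vⱼ` of `maxⱼ |aⱼ|·N(vⱼ)`. -/
noncomputable def groundFieldExt (K : Type*) {L V : Type*} [NormedField K] [NormedField L]
    [Algebra K L] [AddCommGroup V] [Module K V] (N : V → ℝ) (w : L ⊗[K] V) : ℝ :=
  sInf {r | ∃ (n : ℕ) (a : Fin (n + 1) → L) (v : Fin (n + 1) → V),
    w = ∑ j, a j ⊗ₜ[K] v j ∧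
    r = Finset.univ.sup' Finset.univ_nonempty fun j => ‖a j‖ * N (v j)}

lemma exists_rep {K L V : Type*} [NormedField K] [NormedField L] [Algebra K L]
    [AddCommGroup V] [Module K V] (w : L ⊗[K] V) :
    ∃ (n : ℕ) (a : Fin (n + 1) → L) (v : Fin (n + 1) → V), w = ∑ j, a j ⊗ₜ[K] v j := by
  induction w with
  | zero => exact ⟨0, 0, 0, by simp⟩
  | tmul x y => exact ⟨0, fun _ => x, fun _ => y, by simp⟩
  | add w₁ w₂ h1 h2 =>
    obtain ⟨n, a, v, rfl⟩ := h1
    obtain ⟨m, a', v', rfl⟩ := h2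
    refine ⟨n + 1 + m, (Fin.append a a' : Fin ((n + 1) + (m + 1)) → L),
      (Fin.append v v' : Fin ((n + 1) + (m + 1)) → V), ?_⟩
    show _ = ∑ j : Fin ((n + 1) + (m + 1)), _
    conv_rhs => rw [Fin.sum_univ_add]
    simp [Fin.append_left, Fin.append_right]

/-- The ground field extension of a non-Archimedean norm along an isometric extension of
non-Archimedean fields is a non-Archimedean norm on `V_L` extending `N`. -/
theorem groundFieldExt_isNAnorm
    (K L V : Type*) [NormedField K] [IsUltrametricDist K] [CompleteSpace K]
    [NormedField L] [IsUltrametricDist L] [CompleteSpace L] [Algebra K L]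
    (hisom : ∀ x : K, ‖algebraMap K L x‖ = ‖x‖)
    [AddCommGroup V] [Module K V] [FiniteDimensional K V]
    (N : V → ℝ) (hN : IsNAnorm K N) :
    IsNAnorm L (groundFieldExt K (L := L) N) ∧
    ∀ v : V, groundFieldExt K (L := L) N ((1 : L) ⊗ₜ[K] v) = N v := by
  obtain ⟨hN1, hN2, hN3, hN4⟩ := hN
  have h0 : N 0 = 0 := (hN2 0).mpr rfl
  set S : L ⊗[K] V → Set ℝ := fun w =>
    {r | ∃ (n : ℕ) (a : Fin (n + 1) → L) (v : Fin (n + 1) → V),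
      w = ∑ j, a j ⊗ₜ[K] v j ∧
      r = Finset.univ.sup' Finset.univ_nonempty fun j => ‖a j‖ * N (v j)} with hS
  have hNL : ∀ w, groundFieldExt K (L := L) N w = sInf (S w) := fun _ => rfl
  have hSne : ∀ w, (S w).Nonempty := by
    intro w
    obtain ⟨n, a, v, hw⟩ := exists_rep w
    exact ⟨_, n, a, v, hw, rfl⟩
  have hS0 : ∀ w, ∀ r ∈ S w, 0 ≤ r := by
    rintro w r ⟨n, a, v, -, rfl⟩
    exact le_trans (mul_nonneg (norm_nonneg (a 0)) (hN1 (v 0)))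
      (Finset.le_sup' (fun j => ‖a j‖ * N (v j)) (Finset.mem_univ (0 : Fin (n + 1))))
  have hSbdd : ∀ w, BddBelow (S w) := fun w => ⟨0, hS0 w⟩
  have hnonneg : ∀ w, 0 ≤ groundFieldExt K (L := L) N w :=
    fun w => le_csInf (hSne w) (hS0 w)
  have hzero : groundFieldExt K (L := L) N 0 = 0 := by
    refine le_antisymm ?_ (hnonneg 0)
    refine csInf_le (hSbdd 0) ⟨0, 0, 0, by simp, ?_⟩
    simp [h0]
  -- subadditivity
  have hadd : ∀ w₁ w₂ : L ⊗[K] V, groundFieldExt K (L := L) N (w₁ + w₂) ≤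
      max (groundFieldExt K (L := L) N w₁) (groundFieldExt K (L := L) N w₂) := by
    intro w₁ w₂
    have hfp : ∀ ε > (0:ℝ), groundFieldExt K (L := L) N (w₁ + w₂) ≤
        max (groundFieldExt K (L := L) N w₁) (groundFieldExt K (L := L) N w₂) + ε := by
      intro ε hε
      obtain ⟨r₁, hr₁S, hr₁⟩ := exists_lt_of_csInf_lt (hSne w₁)
        (lt_add_of_pos_right (sInf (S w₁)) hε)
      obtain ⟨r₂, hr₂S, hr₂⟩ := exists_lt_of_csInf_lt (hSne w₂)
        (lt_add_of_pos_right (sInf (S w₂)) hε)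
      obtain ⟨n, a, v, hw1, hv1⟩ := hr₁S
      obtain ⟨m, a', v', hw2, hv2⟩ := hr₂S
      haveI : Nonempty (Fin ((n + 1) + (m + 1))) := ⟨Fin.last (n + 1 + m)⟩
      have hmem : (Finset.univ.sup' Finset.univ_nonempty fun j : Fin ((n + 1) + (m + 1)) =>
          ‖(Fin.append a a' : Fin ((n+1)+(m+1)) → L) j‖ *
            N ((Fin.append v v' : Fin ((n+1)+(m+1)) → V) j)) ∈ S (w₁ + w₂) := by
        refine ⟨n + 1 + m, (Fin.append a a' : Fin ((n+1)+(m+1)) → L),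
          (Fin.append v v' : Fin ((n+1)+(m+1)) → V), ?_, rfl⟩
        show _ = ∑ j : Fin ((n + 1) + (m + 1)), _
        conv_rhs => rw [Fin.sum_univ_add]
        simp only [Fin.append_left, Fin.append_right]
        rw [hw1, hw2]
      have hb : (Finset.univ.sup' Finset.univ_nonempty fun j : Fin ((n + 1) + (m + 1)) =>
          ‖(Fin.append a a' : Fin ((n+1)+(m+1)) → L) j‖ *
            N ((Fin.append v v' : Fin ((n+1)+(m+1)) → V) j)) ≤ max r₁ r₂ := by
        apply Finset.sup'_le
        intro j _
        refine Fin.addCases (fun i => ?_) (fun i => ?_) j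
        · rw [Fin.append_left, Fin.append_left, hv1]
          exact le_trans (Finset.le_sup' (fun j => ‖a j‖ * N (v j)) (Finset.mem_univ i))
            (le_max_left _ _)
        · rw [Fin.append_right, Fin.append_right, hv2]
          exact le_trans (Finset.le_sup' (fun j => ‖a' j‖ * N (v' j)) (Finset.mem_univ i))
            (le_max_right _ _)
      refine le_trans (csInf_le (hSbdd _) hmem) (hb.trans ?_)
      rw [hNL, hNL]
      exact max_le (hr₁.le.trans (by simp)) (hr₂.le.trans (by simp))
    by_contra hcon
    push_neg at hcon
    linarith [hfp ((groundFieldExt K (L := L) N (w₁ + w₂) -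
      max (groundFieldExt K (L := L) N w₁) (groundFieldExt K (L := L) N w₂)) / 2) (by linarith)]
  -- homogeneity
  have hsubset : ∀ (a : L), a ≠ 0 → ∀ w, (fun r => ‖a‖ * r) '' S w ⊆ S (a • w) := by
    rintro a ha w - ⟨r, ⟨n, b, v, hw, hv⟩, rfl⟩
    refine ⟨n, fun j => a * b j, v, ?_, ?_⟩
    · rw [hw, Finset.smul_sum]
      exact Finset.sum_congr rfl fun j _ => by
        rw [TensorProduct.smul_tmul', smul_eq_mul]
    · rw [hv]
      show ‖a‖ * _ = _
      rw [mul_sup'' _ _ (norm_nonneg a)]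
      exact Finset.sup'_congr _ rfl fun j _ => by rw [norm_mul]; ring
  have hsmul : ∀ (a : L) (w : L ⊗[K] V), groundFieldExt K (L := L) N (a • w) =
      ‖a‖ * groundFieldExt K (L := L) N w := by
    intro a w
    rcases eq_or_ne a 0 with rfl | ha
    · rw [zero_smul, hzero, norm_zero, zero_mul]
    · have h1 : S (a • w) = (fun r => ‖a‖ * r) '' S w := by
        refine Set.Subset.antisymm ?_ (hsubset a ha w)
        intro r hr
        have h2 : ‖a⁻¹‖ * r ∈ S w := by
          have h3 := hsubset a⁻¹ (inv_ne_zero ha) (a • w) ⟨r, hr, rfl⟩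
          rwa [smul_smul, inv_mul_cancel₀ ha, one_smul] at h3
        refine ⟨‖a⁻¹‖ * r, h2, ?_⟩
        show ‖a‖ * (‖a⁻¹‖ * r) = r
        rw [norm_inv, ← mul_assoc, mul_inv_cancel₀ (norm_ne_zero_iff.mpr ha), one_mul]
      rw [hNL, hNL, h1]
      have h4 : (fun r => ‖a‖ * r) '' S w = ‖a‖ • S w := by
        rw [← Set.image_smul]
        simp only [smul_eq_mul]
      rw [h4, Real.sInf_smul_of_nonneg (norm_nonneg a), smul_eq_mul]
  -- now the dimension-dependent parts
  have hdefext : (∀ w : L ⊗[K] V, groundFieldExt K (L := L) N w = 0 → w = 0) ∧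
      (∀ v : V, groundFieldExt K (L := L) N ((1 : L) ⊗ₜ[K] v) = N v) := by
    rcases Nat.eq_zero_or_pos (Module.finrank K V) with hd | hd
    · haveI : Subsingleton V := Module.finrank_zero_iff.mp hd
      have hVw : ∀ w : L ⊗[K] V, w = 0 := by
        intro w
        obtain ⟨n, a, v, rfl⟩ := exists_rep w
        have : ∀ j, v j = (0 : V) := fun j => Subsingleton.elim _ _
        simp [this]
      exact ⟨fun w _ => hVw w, fun v => by
        rw [show v = 0 from Subsingleton.elim _ _, show ((1:L) ⊗ₜ[K] (0:V)) = 0 by simp,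
          hzero, h0]⟩
    · obtain ⟨m, hm⟩ := Nat.exists_eq_succ_of_ne_zero hd.ne'
      -- for every α there is an α-orthogonal basis, giving coordinatewise lower bounds
      have hbasis : ∀ α : ℝ, 0 < α → α < 1 → ∃ bb : Module.Basis (Fin (m + 1)) K V,
          ∀ (w : L ⊗[K] V), ∀ r ∈ S w, ∀ i : Fin (m + 1),
            α * (‖((bb.baseChange L).repr w) i‖ * N (bb i)) ≤ r := by
        intro α hα0 hα1
        obtain ⟨e, heW, hspan, hene, horth⟩ := exists_orth N ⟨hN1, hN2, hN3, hN4⟩ (m + 1) ⊤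
          (by rw [finrank_top, hm]) α hα0 hα1
        have hcard : Fintype.card (Fin (m + 1)) = Module.finrank K V := by
          rw [Fintype.card_fin, hm]
        let bb : Module.Basis (Fin (m + 1)) K V := basisOfTopLeSpanOfCardEqFinrank e hspan hcard
        have hco : ⇑bb = e := coe_basisOfTopLeSpanOfCardEqFinrank e hspan hcard
        refine ⟨bb, ?_⟩
        rintro w r ⟨n, a, v, rfl, rfl⟩ i
        have horthb : ∀ (x : Fin (m + 1) → K) (i : Fin (m + 1)),
            α * (‖x i‖ * N (bb i)) ≤ N (∑ j, x j • bb j) := by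
          simp only [hco]; exact horth
        set c : Fin (n + 1) → K := fun j => bb.repr (v j) i with hcdef
        have hrepr : ((bb.baseChange L).repr (∑ j, a j ⊗ₜ[K] v j)) i = ∑ j, c j • a j := by
          rw [map_sum, Finset.sum_apply']
          exact Finset.sum_congr rfl fun j _ => Module.Basis.baseChange_repr_tmul _ _ _ _ _
        set R := Finset.univ.sup' Finset.univ_nonempty fun j : Fin (n+1) => ‖a j‖ * N (v j)
          with hRdef
        have hsmulnorm : ∀ (k : K) (l : L), ‖k • l‖ = ‖k‖ * ‖l‖ := by
          intro k l
          rw [Algebra.smul_def, norm_mul, hisom]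
        have hnorm : ‖(∑ j, c j • a j : L)‖ ≤
            Finset.univ.sup' Finset.univ_nonempty fun j : Fin (n+1) => ‖c j‖ * ‖a j‖ := by
          apply naSum (fun x : L => ‖x‖) norm_zero
            (fun x y => IsUltrametricDist.norm_add_le_max x y)
          · exact le_trans (mul_nonneg (norm_nonneg (c 0)) (norm_nonneg (a 0)))
              (Finset.le_sup' (fun j => ‖c j‖ * ‖a j‖) (Finset.mem_univ (0 : Fin (n + 1))))
          · intro j _
            rw [hsmulnorm]
            exact Finset.le_sup' (fun j => ‖c j‖ * ‖a j‖) (Finset.mem_univ j)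
        have hj : ∀ j : Fin (n + 1), α * N (bb i) * (‖c j‖ * ‖a j‖) ≤ R := by
          intro j
          have h1 : α * (‖c j‖ * N (bb i)) ≤ N (v j) := by
            have h2 := horthb (fun k => bb.repr (v j) k) i
            rwa [bb.sum_repr (v j)] at h2
          calc α * N (bb i) * (‖c j‖ * ‖a j‖) = (α * (‖c j‖ * N (bb i))) * ‖a j‖ := by ring
            _ ≤ N (v j) * ‖a j‖ := mul_le_mul_of_nonneg_right h1 (norm_nonneg _)
            _ = ‖a j‖ * N (v j) := mul_comm _ _
            _ ≤ R := by
                rw [hRdef]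
                exact Finset.le_sup' (fun j => ‖a j‖ * N (v j)) (Finset.mem_univ j)
        have hαN : 0 ≤ α * N (bb i) := mul_nonneg hα0.le (hN1 _)
        calc α * (‖((bb.baseChange L).repr (∑ j, a j ⊗ₜ[K] v j)) i‖ * N (bb i))
            = α * N (bb i) * ‖((bb.baseChange L).repr (∑ j, a j ⊗ₜ[K] v j)) i‖ := by ring
          _ ≤ α * N (bb i) *
              (Finset.univ.sup' Finset.univ_nonempty fun j : Fin (n+1) => ‖c j‖ * ‖a j‖) := by
              rw [hrepr]
              exact mul_le_mul_of_nonneg_left hnorm hαN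
          _ = Finset.univ.sup' Finset.univ_nonempty
              (fun j : Fin (n+1) => α * N (bb i) * (‖c j‖ * ‖a j‖)) := mul_sup'' _ _ hαN
          _ ≤ R := Finset.sup'_le _ _ fun j _ => hj j
      constructor
      · -- definiteness
        intro w hw0
        by_contra hw
        obtain ⟨bb, hkey⟩ := hbasis (1/2) (by norm_num) (by norm_num)
        have hrw : ∃ i, ((bb.baseChange L).repr w) i ≠ 0 := by
          by_contra hall
          push_neg at hall
          apply hw
          have : (bb.baseChange L).repr w = 0 := Finsupp.ext hall
          simpa using congrArg ((bb.baseChange L).repr.symm) this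
        obtain ⟨i, hi⟩ := hrw
        have hpos : 0 < (1/2 : ℝ) * (‖((bb.baseChange L).repr w) i‖ * N (bb i)) := by
          have h1 : 0 < ‖((bb.baseChange L).repr w) i‖ := norm_pos_iff.mpr hi
          have h2 : 0 < N (bb i) := (hN1 _).lt_of_ne fun h =>
            bb.ne_zero i ((hN2 _).mp h.symm)
          positivity
        have hle : (1/2 : ℝ) * (‖((bb.baseChange L).repr w) i‖ * N (bb i)) ≤
            groundFieldExt K (L := L) N w :=
          le_csInf (hSne w) fun r hr => hkey w r hr i
        rw [hw0] at hle
        linarith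
      · -- extension property
        intro v
        refine le_antisymm ?_ ?_
        · refine csInf_le (hSbdd _) ⟨0, fun _ => 1, fun _ => v, by simp, ?_⟩
          rw [Finset.sup'_const]
          rw [norm_one, one_mul]
        · -- N v ≤ NL (1 ⊗ v)
          have hαle : ∀ α : ℝ, 0 < α → α < 1 →
              α * N v ≤ groundFieldExt K (L := L) N ((1 : L) ⊗ₜ[K] v) := by
            intro α hα0 hα1
            obtain ⟨bb, hkey⟩ := hbasis α hα0 hα1
            refine le_csInf (hSne _) fun r hr => ?_
            have hper : ∀ i : Fin (m + 1), α * (‖bb.repr v i‖ * N (bb i)) ≤ r := by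
              intro i
              have h1 := hkey _ r hr i
              have h2 : ((bb.baseChange L).repr ((1 : L) ⊗ₜ[K] v)) i =
                  algebraMap K L (bb.repr v i) := by
                rw [Module.Basis.baseChange_repr_tmul, Algebra.smul_def, mul_one]
              rwa [h2, hisom] at h1
            have hNv : N v ≤ Finset.univ.sup' Finset.univ_nonempty
                (fun i : Fin (m + 1) => ‖bb.repr v i‖ * N (bb i)) := by
              have h3 : N (∑ i, bb.repr v i • bb i) ≤ Finset.univ.sup' Finset.univ_nonempty
                  (fun i : Fin (m + 1) => ‖bb.repr v i‖ * N (bb i)) := by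
                apply naSum N h0 hN4
                · exact le_trans (mul_nonneg (norm_nonneg (bb.repr v 0)) (hN1 (bb 0)))
                    (Finset.le_sup' (fun i => ‖bb.repr v i‖ * N (bb i))
                      (Finset.mem_univ (0 : Fin (m + 1))))
                · intro i _
                  rw [hN3]
                  exact Finset.le_sup' (fun i => ‖(bb.repr v) i‖ * N (bb i)) (Finset.mem_univ i)
              rwa [bb.sum_repr v] at h3
            calc α * N v ≤ α * Finset.univ.sup' Finset.univ_nonempty
                  (fun i : Fin (m + 1) => ‖bb.repr v i‖ * N (bb i)) :=
                  mul_le_mul_of_nonneg_left hNv hα0.le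
              _ = Finset.univ.sup' Finset.univ_nonempty
                  (fun i : Fin (m + 1) => α * (‖bb.repr v i‖ * N (bb i))) :=
                  mul_sup'' _ _ hα0.le
              _ ≤ r := Finset.sup'_le _ _ fun i _ => hper i
          by_contra hcon
          push_neg at hcon
          have hNv0 : 0 < N v := lt_of_le_of_lt (hnonneg _) hcon
          have h1 : groundFieldExt K (L := L) N ((1 : L) ⊗ₜ[K] v) / N v < 1 :=
            (div_lt_one hNv0).mpr hcon
          obtain ⟨α, hα1, hα2⟩ := exists_between h1
          have hα0 : 0 < α :=
            lt_of_le_of_lt (div_nonneg (hnonneg _) hNv0.le) hα1 |>.le.lt_of_ne' (by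
              intro h; exact absurd h (ne_of_gt (lt_of_le_of_lt (div_nonneg (hnonneg _) hNv0.le) hα1)))
          have h2 := hαle α hα0 hα2
          rw [div_lt_iff₀ hNv0] at hα1
          linarith [mul_comm α (N v)]
  exact ⟨⟨hnonneg, fun w => ⟨hdefext.1 w, fun h => h ▸ hzero⟩, hsmul, hadd⟩, hdefext.2⟩
end

section
/- Let L/K be an isometric extension of non-Archimedean fields, V a finite-dimensional K-vector space, and N a non-Archimedean norm on V that is diagonalizable in a basis (e₁,…,e_d). Then the ground field extension N_L on V_L = L ⊗_K V is diagonalizable in the basis (1⊗e₁,…,1⊗e_d); explicitly, N_L(Σᵢ cᵢ·(1⊗eᵢ)) = maxᵢ |cᵢ|_L·N(eᵢ) for all c₁,…,c_d ∈ L. -/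
open scoped BigOperators

open scoped TensorProduct

/-- The ground field extension of a norm diagonalizable in a basis `(e₁, …, e_d)` is
diagonalizable in the basis `(1⊗e₁, …, 1⊗e_d)`:
`N_L(Σᵢ cᵢ·(1⊗eᵢ)) = maxᵢ |cᵢ|·N(eᵢ)`. -/
theorem groundFieldExt_diagonalizable
    (K L V : Type*) [NormedField K] [IsUltrametricDist K] [CompleteSpace K]
    [NormedField L] [IsUltrametricDist L] [CompleteSpace L] [Algebra K L]
    (hisom : ∀ x : K, ‖algebraMap K L x‖ = ‖x‖)
    [AddCommGroup V] [Module K V] [FiniteDimensional K V]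
    (N : V → ℝ) (hN : IsNAnorm K N)
    (d : ℕ) (b : Module.Basis (Fin d) K V)
    (hdiag : ∀ a : Fin d → K, N (∑ i, a i • b i) = ⨆ i, ‖a i‖ * N (b i)) :
    ∀ c : Fin d → L,
      groundFieldExt K (L := L) N (∑ i, c i • ((1 : L) ⊗ₜ[K] b i)) =
        ⨆ i, ‖c i‖ * N (b i) := by
  intro c
  obtain ⟨hpos, hzero, hsmul, hadd⟩ := hN
  have hbddA : ∀ f : Fin d → ℝ, BddAbove (Set.range f) := fun f =>
    Set.Finite.bddAbove (Set.finite_range f)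
  have hrepr_le : ∀ (v : V) (i : Fin d), ‖b.repr v i‖ * N (b i) ≤ N v := by
    intro v i
    have h1 : N v = ⨆ i, ‖b.repr v i‖ * N (b i) := by
      conv_lhs => rw [← b.sum_repr v]
      exact hdiag _
    rw [h1]
    exact le_ciSup (f := fun i => ‖(b.repr v) i‖ * N (b i)) (hbddA _) i
  set B := b.baseChange L with hB
  set w := ∑ i, c i • ((1 : L) ⊗ₜ[K] b i) with hw
  have hwB : w = ∑ i, c i • B i := by simp [hB, hw]
  have hcrepr : ∀ i, c i = B.repr w i := by
    intro i
    rw [hwB]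
    exact (congrFun (B.repr_sum_self c) i).symm
  set M := ⨆ i, ‖c i‖ * N (b i) with hM
  set S : Set ℝ := {r | ∃ (n : ℕ) (a : Fin (n + 1) → L) (v : Fin (n + 1) → V),
    w = ∑ j, a j ⊗ₜ[K] v j ∧
    r = Finset.univ.sup' Finset.univ_nonempty fun j => ‖a j‖ * N (v j)} with hS
  have hlb : ∀ r ∈ S, M ≤ r := by
    rintro r ⟨n, a, v, hrep, rfl⟩
    have hterm : ∀ i : Fin d, ‖c i‖ * N (b i) ≤
        Finset.univ.sup' Finset.univ_nonempty fun j => ‖a j‖ * N (v j) := by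
      intro i
      have hci : c i = ∑ j, b.repr (v j) i • a j := by
        rw [hcrepr i, hrep]
        simp [hB, map_sum, Finsupp.finset_sum_apply, Module.Basis.baseChange_repr_tmul]
      obtain ⟨j, -, hj⟩ := IsUltrametricDist.exists_norm_finset_sum_le_of_nonempty
        Finset.univ_nonempty (fun j => b.repr (v j) i • a j)
      calc ‖c i‖ * N (b i) ≤ ‖b.repr (v j) i • a j‖ * N (b i) := by
            rw [hci]; exact mul_le_mul_of_nonneg_right hj (hpos _)
        _ = ‖a j‖ * (‖b.repr (v j) i‖ * N (b i)) := by
            rw [Algebra.smul_def, norm_mul, hisom]; ring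
        _ ≤ ‖a j‖ * N (v j) :=
            mul_le_mul_of_nonneg_left (hrepr_le _ _) (norm_nonneg _)
        _ ≤ _ := Finset.le_sup' (f := fun j => ‖a j‖ * N (v j)) (Finset.mem_univ j)
    rcases isEmpty_or_nonempty (Fin d) with h | h
    · rw [hM, Real.iSup_of_isEmpty]
      exact le_trans (mul_nonneg (norm_nonneg (a 0)) (hpos (v 0)))
        (Finset.le_sup' (f := fun j => ‖a j‖ * N (v j)) (Finset.mem_univ 0))
    · exact ciSup_le hterm
  have hmem : M ∈ S := by
    rcases Nat.eq_zero_or_pos d with hd | hd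
    · subst hd
      refine ⟨0, fun _ => 0, fun _ => 0, ?_, ?_⟩
      · simp [hw]
      · have hN0 : N 0 = 0 := (hzero 0).mpr rfl
        rw [hM, Real.iSup_of_isEmpty]
        simp [hN0]
    · obtain ⟨m, rfl⟩ : ∃ m, d = m + 1 := ⟨d - 1, (Nat.succ_pred_eq_of_pos hd).symm⟩
      refine ⟨m, c, fun i => b i, ?_, ?_⟩
      · rw [hw]
        refine Finset.sum_congr rfl fun i _ => ?_
        rw [TensorProduct.smul_tmul', smul_eq_mul, mul_one]
      · refine le_antisymm
          (ciSup_le fun i =>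
            Finset.le_sup' (f := fun j => ‖c j‖ * N (b j)) (Finset.mem_univ i))
          (Finset.sup'_le _ _ fun i _ =>
            le_ciSup (f := fun j => ‖c j‖ * N (b j)) (hbddA _) i)
  have hge : groundFieldExt K (L := L) N w = sInf S := rfl
  rw [hge]
  exact le_antisymm (csInf_le ⟨M, hlb⟩ hmem) (le_csInf ⟨M, hmem⟩ hlb)
end

section
/- Let d ≥ 1, let Γ ⊆ ℕ^{1+d} be an admissible graded subsemigroup, and let Φ : Γ → ℝ be superadditive and linearly bounded, i.e. there is C > 0 with |Φ(m,α)| ≤ C·m on Γ. Define the Chebyshev function G_Φ on the interior of Δ(Γ) by G_Φ(x) = sup{t ∈ ℝ : x ∈ Δ(Γ^{Φ,≥t})}. Then G_Φ takes finite values and is concave on the interior of Δ(Γ). -/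
open scoped BigOperators
open Filter MeasureTheory

/-- Points of `ℕ^{1+d}`, written as a degree together with a vector in `ℕ^d`. -/
abbrev NPt (d : ℕ) := ℕ × (Fin d → ℕ)

/-- A subset of `ℕ^{1+d}` is a (graded) subsemigroup if it is closed under addition. -/
def IsGradedSubsemigroup {d : ℕ} (Γ : Set (NPt d)) : Prop :=
  ∀ x ∈ Γ, ∀ y ∈ Γ, x + y ∈ Γ

/-- Linear growth: there is `C > 0` with `|α|₁ ≤ C·m` for all `(m, α) ∈ Γ`. -/
def HasLinearGrowth {d : ℕ} (Γ : Set (NPt d)) : Prop :=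
  ∃ C : ℝ, 0 < C ∧ ∀ p ∈ Γ, (∑ i, (p.2 i : ℝ)) ≤ C * p.1

/-- The canonical embedding `ℕ^{1+d} → ℤ^{1+d}`. -/
def nptToInt {d : ℕ} (p : NPt d) : ℤ × (Fin d → ℤ) :=
  ((p.1 : ℤ), fun i => (p.2 i : ℤ))

/-- `Γ` generates `ℤ^{1+d}` as a group. -/
def GeneratesFullLattice {d : ℕ} (Γ : Set (NPt d)) : Prop :=
  AddSubgroup.closure (nptToInt '' Γ) = ⊤

/-- An admissible graded subsemigroup of `ℕ^{1+d}`. -/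
def IsAdmissible {d : ℕ} (Γ : Set (NPt d)) : Prop :=
  IsGradedSubsemigroup Γ ∧ HasLinearGrowth Γ ∧ GeneratesFullLattice Γ

/-- The canonical embedding `ℕ^{1+d} → ℝ^{1+d}`. -/
def nptToReal {d : ℕ} (p : NPt d) : ℝ × (Fin d → ℝ) :=
  ((p.1 : ℝ), fun i => (p.2 i : ℝ))

/-- The convex cone generated by a subset `S` of a real vector space: the set of finite
nonnegative linear combinations of elements of `S`. -/
def coneGen {E : Type*} [AddCommMonoid E] [Module ℝ E] (S : Set E) : Set E :=
  {y | ∃ (n : ℕ) (c : Fin n → ℝ) (p : Fin n → E),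
    (∀ i, 0 ≤ c i) ∧ (∀ i, p i ∈ S) ∧ y = ∑ i, c i • p i}

/-- The Okounkov body of a subset `Σ ⊆ ℕ^{1+d}`: the slice at height `1` of the closed convex
cone generated by `Σ` in `ℝ^{1+d}`. -/
def okounkovBody {d : ℕ} (S : Set (NPt d)) : Set (Fin d → ℝ) :=
  {x | ((1 : ℝ), x) ∈ closure (coneGen (nptToReal '' S))}

/-- The graded piece `Γ_m` of `Γ ⊆ ℕ^{1+d}`. -/
def gradedPiece {d : ℕ} (Γ : Set (NPt d)) (m : ℕ) : Set (Fin d → ℕ) :=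
  {α | (m, α) ∈ Γ}

/-- The superlevel semigroup `Γ^{Φ,≥t}` of a function `Φ` on `Γ`. -/
def superlevel {d : ℕ} (Γ : Set (NPt d)) (Φ : NPt d → ℝ) (t : ℝ) : Set (NPt d) :=
  {p ∈ Γ | p.1 * t ≤ Φ p}

/-- `θ = limsup_{n → ∞} sup_{α ∈ Γ_n} Φ(n,α)/n`. -/
noncomputable def thetaSup {d : ℕ} (Γ : Set (NPt d)) (Φ : NPt d → ℝ) : ℝ :=
  Filter.limsup (fun n : ℕ => sSup {r | ∃ α, (n, α) ∈ Γ ∧ r = Φ (n, α) / n}) Filter.atTop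


/-- The Chebyshev function (concave transform) of a superadditive function `Φ` on `Γ`:
`G_Φ(x) = sup {t ∈ ℝ : x ∈ Δ(Γ^{Φ,≥t})}`. -/
noncomputable def chebyshevFn {d : ℕ} (Γ : Set (NPt d)) (Φ : NPt d → ℝ)
    (x : Fin d → ℝ) : ℝ :=
  sSup {t : ℝ | x ∈ okounkovBody (superlevel Γ Φ t)}

section Aux

variable {d : ℕ}

lemma nptToReal_add (p q : NPt d) : nptToReal (p + q) = nptToReal p + nptToReal q := by
  refine Prod.ext ?_ ?_
  · show ((p.1 + q.1 : ℕ) : ℝ) = (p.1 : ℝ) + (q.1 : ℝ); push_cast; ring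
  · funext i; show ((p.2 i + q.2 i : ℕ) : ℝ) = (p.2 i : ℝ) + (q.2 i : ℝ); push_cast; ring

lemma nptToReal_nsmul (k : ℕ) (p : NPt d) : nptToReal (k • p) = (k : ℝ) • nptToReal p := by
  refine Prod.ext ?_ ?_
  · show ((k • p.1 : ℕ) : ℝ) = (k : ℝ) * (p.1 : ℝ); push_cast [smul_eq_mul]; ring
  · funext i; show ((k • p.2 i : ℕ) : ℝ) = (k : ℝ) * (p.2 i : ℝ); push_cast [smul_eq_mul]; ring

lemma nptToReal_zero : nptToReal (0 : NPt d) = 0 := by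
  refine Prod.ext ?_ ?_ <;> simp [nptToReal] <;> rfl

lemma nptToReal_sum {ι : Type*} (t : Finset ι) (g : ι → NPt d) :
    nptToReal (∑ i ∈ t, g i) = ∑ i ∈ t, nptToReal (g i) := by
  induction t using Finset.cons_induction with
  | empty => simp [nptToReal_zero]
  | cons a t ha ih => rw [Finset.sum_cons, Finset.sum_cons, nptToReal_add, ih]

lemma nptToReal_fst (p : NPt d) : (nptToReal p).1 = (p.1 : ℝ) := rfl

variable {Γ : Set (NPt d)} {Φ : NPt d → ℝ}

lemma cheb_nsmul_mem (hΓ : IsGradedSubsemigroup Γ)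
    (hsuper : ∀ x ∈ Γ, ∀ y ∈ Γ, Φ x + Φ y ≤ Φ (x + y)) :
    ∀ k : ℕ, 1 ≤ k → ∀ p ∈ Γ, k • p ∈ Γ ∧ (k : ℝ) * Φ p ≤ Φ (k • p) := by
  intro k
  induction k with
  | zero => omega
  | succ k ih =>
    intro _ p hp
    rcases Nat.eq_zero_or_pos k with h | h
    · subst h; rw [one_nsmul]; simpa using hp
    · have hk : 1 ≤ k := h
      obtain ⟨hmem, hineq⟩ := ih hk p hp
      have hmem' : (k + 1) • p ∈ Γ := by
        rw [add_nsmul, one_nsmul]; exact hΓ _ hmem _ hp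
      refine ⟨hmem', ?_⟩
      have := hsuper _ hmem _ hp
      rw [add_nsmul, one_nsmul]
      push_cast
      nlinarith [this, hineq]

lemma sum_nsmul_mem (hΓ : IsGradedSubsemigroup Γ)
    (hsuper : ∀ x ∈ Γ, ∀ y ∈ Γ, Φ x + Φ y ≤ Φ (x + y))
    {ι : Type*} {s : Finset ι} (hs : s.Nonempty) (k : ι → ℕ) (p : ι → NPt d)
    (hk : ∀ i ∈ s, 1 ≤ k i) (hp : ∀ i ∈ s, p i ∈ Γ) :
    (∑ i ∈ s, k i • p i) ∈ Γ ∧ ∑ i ∈ s, (k i : ℝ) * Φ (p i) ≤ Φ (∑ i ∈ s, k i • p i) := by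
  induction hs using Finset.Nonempty.cons_induction with
  | singleton a => simpa using cheb_nsmul_mem hΓ hsuper (k a) (hk a (by simp)) (p a) (hp a (by simp))
  | cons a s ha hs ih =>
    have hk' : ∀ i ∈ s, 1 ≤ k i := fun i hi => hk i (Finset.mem_cons_of_mem hi)
    have hp' : ∀ i ∈ s, p i ∈ Γ := fun i hi => hp i (Finset.mem_cons_of_mem hi)
    obtain ⟨hmem, hineq⟩ := ih hk' hp'
    obtain ⟨hmema, hineqa⟩ := cheb_nsmul_mem hΓ hsuper (k a) (hk a (Finset.mem_cons_self a s))
      (p a) (hp a (Finset.mem_cons_self a s))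
    rw [Finset.sum_cons, Finset.sum_cons]
    refine ⟨hΓ _ hmema _ hmem, ?_⟩
    have := hsuper _ hmema _ hmem
    linarith

end Aux

section Round

variable {d : ℕ} {Γ : Set (NPt d)} {Φ : NPt d → ℝ}

lemma floor_div_tendsto {a : ℝ} (ha : 0 ≤ a) :
    Tendsto (fun D : ℕ => (⌊((D : ℝ) + 1) * a⌋₊ : ℝ) / ((D : ℝ) + 1)) atTop (nhds a) := by
  have hlow : Tendsto (fun D : ℕ => a - 1 / ((D : ℝ) + 1)) atTop (nhds a) := by
    simpa using tendsto_const_nhds.sub (tendsto_one_div_add_atTop_nhds_zero_nat : Tendsto (fun n : ℕ => 1 / ((n : ℝ) + 1)) atTop (nhds 0))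
  refine tendsto_of_tendsto_of_tendsto_of_le_of_le hlow tendsto_const_nhds ?_ ?_
  · intro D
    have hD : (0 : ℝ) < (D : ℝ) + 1 := by positivity
    rw [le_div_iff₀ hD]
    have h2 := Nat.lt_floor_add_one (((D : ℝ) + 1) * a)
    have h1 : (a - 1 / ((D : ℝ) + 1)) * ((D : ℝ) + 1) = a * ((D : ℝ) + 1) - 1 := by
      field_simp
    nlinarith [h2, h1]
  · intro D
    have hD : (0 : ℝ) < (D : ℝ) + 1 := by positivity
    rw [div_le_iff₀ hD]
    have := Nat.floor_le (by positivity : (0:ℝ) ≤ ((D : ℝ) + 1) * a)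
    linarith [this]

lemma rounding (hΓ : IsGradedSubsemigroup Γ)
    (hsuper : ∀ x ∈ Γ, ∀ y ∈ Γ, Φ x + Φ y ≤ Φ (x + y))
    {v : ℝ} {ι : Type} [Fintype ι] (c : ι → ℝ) (p : ι → NPt d) (r : ι → ℝ)
    (hc : ∀ i, 0 ≤ c i) (hp : ∀ i, p i ∈ Γ) (hr : ∀ i, r i ≤ Φ (p i))
    (hlt : v * ∑ i, c i * ((p i).1 : ℝ) < ∑ i, c i * r i) :
    (∑ i, c i • nptToReal (p i)) ∈ closure (coneGen (nptToReal '' superlevel Γ Φ v)) := by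
  classical
  set k : ℕ → ι → ℕ := fun D i => ⌊((D : ℝ) + 1) * c i⌋₊ with hk
  set e : ℕ → ι → ℝ := fun D i => (k D i : ℝ) / ((D : ℝ) + 1) with he
  have hetend : ∀ i, Tendsto (fun D => e D i) atTop (nhds (c i)) := fun i =>
    floor_div_tendsto (hc i)
  set f : ℕ → ℝ × (Fin d → ℝ) := fun D => ∑ i, e D i • nptToReal (p i) with hf
  have hftend : Tendsto f atTop (nhds (∑ i, c i • nptToReal (p i))) := by
    apply tendsto_finset_sum
    intro i _
    exact (hetend i).smul_const _
  -- eventual strict inequality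
  have hineqtend : Tendsto (fun D => ∑ i, e D i * (r i - v * ((p i).1 : ℝ))) atTop
      (nhds (∑ i, c i * (r i - v * ((p i).1 : ℝ)))) := by
    apply tendsto_finset_sum
    intro i _
    exact (hetend i).mul_const _
  have hpos : 0 < ∑ i, c i * (r i - v * ((p i).1 : ℝ)) := by
    have : ∑ i, c i * (r i - v * ((p i).1 : ℝ))
        = (∑ i, c i * r i) - v * ∑ i, c i * ((p i).1 : ℝ) := by
      rw [Finset.mul_sum, ← Finset.sum_sub_distrib]
      congr 1; funext i; ring
    rw [this]; linarith
  have hev : ∀ᶠ D in atTop, 0 < ∑ i, e D i * (r i - v * ((p i).1 : ℝ)) :=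
    hineqtend.eventually (eventually_gt_nhds hpos)
  refine mem_closure_of_tendsto hftend ?_
  filter_upwards [hev] with D hD
  have hD1 : (0 : ℝ) < (D : ℝ) + 1 := by positivity
  classical
  set s : Finset ι := Finset.univ.filter (fun i => 1 ≤ k D i) with hs
  -- q ∈ Γ and superlevel
  set q : NPt d := ∑ i, k D i • p i with hq
  have hzero : ∀ i ∈ Finset.univ, i ∉ s → k D i • p i = 0 := by
    intro i _ hi
    have : k D i = 0 := by
      by_contra h
      exact hi (Finset.mem_filter.mpr ⟨Finset.mem_univ i, by omega⟩)
    rw [this, zero_nsmul]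
  have hqs : q = ∑ i ∈ s, k D i • p i := by
    rw [hq, Finset.sum_subset (Finset.filter_subset _ _)]
    intro i hi his; exact hzero i hi his
  have hsne : s.Nonempty := by
    by_contra h
    rw [Finset.not_nonempty_iff_eq_empty] at h
    have : ∀ i, k D i = 0 := by
      intro i
      by_contra hki
      have : i ∈ s := Finset.mem_filter.mpr ⟨Finset.mem_univ i, by omega⟩
      simp [h] at this
    have : ∑ i, e D i * (r i - v * ((p i).1 : ℝ)) = 0 := by
      apply Finset.sum_eq_zero
      intro i _
      simp [he, this i]
    linarith
  obtain ⟨hqΓ, hqΦ⟩ := sum_nsmul_mem hΓ hsuper hsne (k D) p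
    (fun i hi => (Finset.mem_filter.mp hi).2) (fun i _ => hp i)
  rw [← hqs] at hqΓ hqΦ
  -- the level inequality
  have hkr : ∀ i ∈ Finset.univ, i ∉ s → (k D i : ℝ) * r i = 0 := by
    intro i _ hi
    have : k D i = 0 := by
      by_contra h
      exact hi (Finset.mem_filter.mpr ⟨Finset.mem_univ i, by omega⟩)
    simp [this]
  have hsum_r : ∑ i, (k D i : ℝ) * r i = ∑ i ∈ s, (k D i : ℝ) * r i :=
    (Finset.sum_subset (Finset.filter_subset _ _) hkr).symm
  have hq1 : ((q.1 : ℕ) : ℝ) = ∑ i, (k D i : ℝ) * ((p i).1 : ℝ) := by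
    have : q.1 = ∑ i, k D i * (p i).1 := by
      rw [hq]
      rw [Prod.fst_sum]
      congr 1
    rw [this]
    push_cast
    rfl
  have hlevel : v * (q.1 : ℝ) ≤ Φ q := by
    have hmul : 0 < ((D : ℝ) + 1) * ∑ i, e D i * (r i - v * ((p i).1 : ℝ)) := by positivity
    have hexp : ((D : ℝ) + 1) * ∑ i, e D i * (r i - v * ((p i).1 : ℝ))
        = ∑ i, (k D i : ℝ) * (r i - v * ((p i).1 : ℝ)) := by
      rw [Finset.mul_sum]
      congr 1; funext i
      rw [he]
      field_simp
    have h1 : 0 < ∑ i, (k D i : ℝ) * (r i - v * ((p i).1 : ℝ)) := hexp ▸ hmul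
    have h2 : v * (q.1 : ℝ) ≤ ∑ i, (k D i : ℝ) * r i := by
      rw [hq1]
      have : ∑ i, (k D i : ℝ) * (r i - v * ((p i).1 : ℝ))
          = (∑ i, (k D i : ℝ) * r i) - v * ∑ i, (k D i : ℝ) * ((p i).1 : ℝ) := by
        rw [Finset.mul_sum, ← Finset.sum_sub_distrib]
        congr 1; funext i; ring
      linarith [this ▸ h1]
    have h3 : ∑ i, (k D i : ℝ) * r i ≤ ∑ i ∈ s, (k D i : ℝ) * Φ (p i) := by
      rw [hsum_r]
      exact Finset.sum_le_sum fun i _ => mul_le_mul_of_nonneg_left (hr i) (Nat.cast_nonneg _)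
    linarith
  have hqmem : q ∈ superlevel Γ Φ v := ⟨hqΓ, by rw [mul_comm]; exact hlevel⟩
  -- f D is a cone combination
  have hfq : f D = (1 / ((D : ℝ) + 1)) • nptToReal q := by
    have hsum : nptToReal q = ∑ i, nptToReal (k D i • p i) := by
      rw [hq, nptToReal_sum]
    rw [hf, hsum, Finset.smul_sum]
    show ∑ i, e D i • nptToReal (p i) = _
    refine Finset.sum_congr rfl fun i _ => ?_
    rw [nptToReal_nsmul, smul_smul]
    congr 1
    rw [he]
    field_simp
  refine ⟨1, fun _ => 1 / ((D : ℝ) + 1), fun _ => nptToReal q, fun _ => by positivity,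
    fun _ => ⟨q, hqmem, rfl⟩, ?_⟩
  rw [hfq, Fin.sum_univ_one]

end Round

section Cone

variable {d : ℕ} {Γ : Set (NPt d)} {Φ : NPt d → ℝ}

lemma coneGen_mono {E : Type*} [AddCommMonoid E] [Module ℝ E] {S T : Set E} (h : S ⊆ T) :
    coneGen S ⊆ coneGen T := by
  rintro y ⟨n, c, p, hc, hp, rfl⟩
  exact ⟨n, c, p, hc, fun i => h (hp i), rfl⟩

lemma smul_mem_coneGen {E : Type*} [AddCommMonoid E] [Module ℝ E] {S : Set E} {a : ℝ}
    (ha : 0 ≤ a) {y : E} (hy : y ∈ coneGen S) : a • y ∈ coneGen S := by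
  obtain ⟨n, c, p, hc, hp, rfl⟩ := hy
  refine ⟨n, fun i => a * c i, p, fun i => mul_nonneg ha (hc i), hp, ?_⟩
  rw [Finset.smul_sum]
  refine Finset.sum_congr rfl fun i _ => ?_
  show a • c i • p i = (a * c i) • p i
  rw [smul_smul]

lemma add_mem_coneGen {E : Type*} [AddCommMonoid E] [Module ℝ E] {S : Set E} {y z : E}
    (hy : y ∈ coneGen S) (hz : z ∈ coneGen S) : y + z ∈ coneGen S := by
  obtain ⟨n, c, p, hc, hp, rfl⟩ := hy
  obtain ⟨m, c', p', hc', hp', rfl⟩ := hz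
  refine ⟨n + m, Fin.append c c', Fin.append p p', ?_, ?_, ?_⟩
  · intro i
    induction i using Fin.addCases with
    | left j => rw [Fin.append_left]; exact hc j
    | right j => rw [Fin.append_right]; exact hc' j
  · intro i
    induction i using Fin.addCases with
    | left j => rw [Fin.append_left]; exact hp j
    | right j => rw [Fin.append_right]; exact hp' j
  · rw [Fin.sum_univ_add]
    congr 1
    · exact Finset.sum_congr rfl fun i _ => by rw [Fin.append_left, Fin.append_left]
    · exact Finset.sum_congr rfl fun i _ => by rw [Fin.append_right, Fin.append_right]

lemma convex_coneGen {E : Type*} [AddCommMonoid E] [Module ℝ E] {S : Set E} :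
    Convex ℝ (coneGen S) := fun y hy z hz a b ha hb _ =>
  add_mem_coneGen (smul_mem_coneGen ha hy) (smul_mem_coneGen hb hz)

lemma okounkovBody_mono {S T : Set (NPt d)} (h : S ⊆ T) :
    okounkovBody S ⊆ okounkovBody T := fun x hx =>
  closure_mono (coneGen_mono (Set.image_mono h)) hx

lemma superlevel_antitone {t t' : ℝ} (h : t' ≤ t) :
    superlevel Γ Φ t ⊆ superlevel Γ Φ t' := fun p hp =>
  ⟨hp.1, le_trans (mul_le_mul_of_nonneg_left h (Nat.cast_nonneg p.1)) hp.2⟩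

lemma convex_okounkovBody (S : Set (NPt d)) : Convex ℝ (okounkovBody S) := by
  intro x hx y hy a b ha hb hab
  have hconv : Convex ℝ (closure (coneGen (nptToReal '' S))) := convex_coneGen.closure
  have := hconv hx hy ha hb hab
  have heq : a • ((1 : ℝ), x) + b • ((1 : ℝ), y) = ((1 : ℝ), a • x + b • y) := by
    refine Prod.ext ?_ rfl
    show a * 1 + b * 1 = 1
    linarith
  rwa [heq] at this

lemma keyStep (hΓ : IsGradedSubsemigroup Γ)
    (hsuper : ∀ x ∈ Γ, ∀ y ∈ Γ, Φ x + Φ y ≤ Φ (x + y))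
    {s t : ℝ} {x y : Fin d → ℝ} {a b : ℝ}
    (ha : 0 ≤ a) (hb : 0 ≤ b) (hab : a + b = 1)
    (hx : x ∈ okounkovBody (superlevel Γ Φ s)) (hy : y ∈ okounkovBody (superlevel Γ Φ t))
    {ε : ℝ} (hε : 0 < ε) :
    (a • x + b • y) ∈ okounkovBody (superlevel Γ Φ (a * s + b * t - ε)) := by
  rcases eq_or_lt_of_le ha with rfl | ha'
  · have hb1 : b = 1 := by linarith
    subst hb1
    rw [zero_smul, one_smul, zero_add]
    exact okounkovBody_mono (superlevel_antitone (by linarith)) hy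
  rcases eq_or_lt_of_le hb with rfl | hb'
  · have ha1 : a = 1 := by linarith
    subst ha1
    rw [zero_smul, one_smul, add_zero]
    exact okounkovBody_mono (superlevel_antitone (by linarith)) hx
  set v : ℝ := a * s + b * t - ε with hv
  obtain ⟨u, hu, hulim⟩ := mem_closure_iff_seq_limit.mp hx
  obtain ⟨w, hw, hwlim⟩ := mem_closure_iff_seq_limit.mp hy
  have hgtend : Tendsto (fun n => a • u n + b • w n) atTop
      (nhds (a • ((1 : ℝ), x) + b • ((1 : ℝ), y))) :=
    ((hulim.const_smul a).add (hwlim.const_smul b))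
  have heq : a • ((1 : ℝ), x) + b • ((1 : ℝ), y) = ((1 : ℝ), a • x + b • y) := by
    refine Prod.ext ?_ rfl
    show a * 1 + b * 1 = 1
    linarith
  rw [heq] at hgtend
  -- eventual numeric inequality
  have hM : Tendsto (fun n => (u n).1) atTop (nhds 1) := by
    have := (continuous_fst.tendsto ((1 : ℝ), x)).comp hulim
    exact this
  have hM' : Tendsto (fun n => (w n).1) atTop (nhds 1) := by
    have := (continuous_fst.tendsto ((1 : ℝ), y)).comp hwlim
    exact this
  have hlhs : Tendsto (fun n => v * (a * (u n).1 + b * (w n).1)) atTop (nhds v) := by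
    have := ((hM.const_mul a).add (hM'.const_mul b)).const_mul v
    simpa [hab] using this
  have hrhs : Tendsto (fun n => a * (s * (u n).1) + b * (t * (w n).1)) atTop
      (nhds (a * s + b * t)) := by
    have := ((hM.const_mul s).const_mul a).add ((hM'.const_mul t).const_mul b)
    simpa using this
  have hev : ∀ᶠ n in atTop,
      v * (a * (u n).1 + b * (w n).1) < a * (s * (u n).1) + b * (t * (w n).1) :=
    hlhs.eventually_lt hrhs (by rw [hv]; linarith)
  have key : ((1 : ℝ), a • x + b • y) ∈
      closure (closure (coneGen (nptToReal '' superlevel Γ Φ v))) := by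
    refine mem_closure_of_tendsto hgtend ?_
    filter_upwards [hev] with n hn
    obtain ⟨n1, c, P, hc, hP, huP⟩ := hu n
    obtain ⟨n2, c', Q, hc', hQ, hwQ⟩ := hw n
    choose pp hpp hppe using hP
    choose qq hqq hqqe using hQ
    have h1 : (u n).1 = ∑ i, c i * ((pp i).1 : ℝ) := by
      rw [huP, Prod.fst_sum]
      refine Finset.sum_congr rfl fun i _ => ?_
      rw [← hppe i]
      rfl
    have h2 : (w n).1 = ∑ j, c' j * ((qq j).1 : ℝ) := by
      rw [hwQ, Prod.fst_sum]
      refine Finset.sum_congr rfl fun j _ => ?_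
      rw [← hqqe j]
      rfl
    have hround := rounding (ι := Fin n1 ⊕ Fin n2) hΓ hsuper
      (Sum.elim (fun i => a * c i) (fun j => b * c' j))
      (Sum.elim pp qq)
      (Sum.elim (fun i => s * ((pp i).1 : ℝ)) (fun j => t * ((qq j).1 : ℝ)))
      (fun i => by rcases i with i | j
                   · exact mul_nonneg ha (hc i)
                   · exact mul_nonneg hb (hc' j))
      (fun i => by rcases i with i | j
                   · exact (hpp i).1
                   · exact (hqq j).1)
      (fun i => by rcases i with i | j
                   · simp only [Sum.elim_inl]; rw [mul_comm]; exact (hpp i).2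
                   · simp only [Sum.elim_inr]; rw [mul_comm]; exact (hqq j).2)
      (by
        rw [Fintype.sum_sum_type, Fintype.sum_sum_type]
        simp only [Sum.elim_inl, Sum.elim_inr]
        have e1 : ∑ i, a * c i * ((pp i).1 : ℝ) = a * (u n).1 := by
          rw [h1, Finset.mul_sum]
          exact Finset.sum_congr rfl fun i _ => by ring
        have e2 : ∑ j, b * c' j * ((qq j).1 : ℝ) = b * (w n).1 := by
          rw [h2, Finset.mul_sum]
          exact Finset.sum_congr rfl fun j _ => by ring
        have e3 : ∑ i, a * c i * (s * ((pp i).1 : ℝ)) = a * (s * (u n).1) := by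
          rw [h1, Finset.mul_sum, Finset.mul_sum]
          exact Finset.sum_congr rfl fun i _ => by ring
        have e4 : ∑ j, b * c' j * (t * ((qq j).1 : ℝ)) = b * (t * (w n).1) := by
          rw [h2, Finset.mul_sum, Finset.mul_sum]
          exact Finset.sum_congr rfl fun j _ => by ring
        rw [e1, e2, e3, e4]
        exact hn)
    have hsum : ∑ i : Fin n1 ⊕ Fin n2,
        (Sum.elim (fun i => a * c i) (fun j => b * c' j)) i •
          nptToReal ((Sum.elim pp qq) i) = a • u n + b • w n := by
      rw [Fintype.sum_sum_type]
      simp only [Sum.elim_inl, Sum.elim_inr]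
      congr 1
      · rw [huP, Finset.smul_sum]
        refine Finset.sum_congr rfl fun i _ => ?_
        rw [hppe i, smul_smul]
      · rw [hwQ, Finset.smul_sum]
        refine Finset.sum_congr rfl fun j _ => ?_
        rw [hqqe j, smul_smul]
    rwa [hsum] at hround
  rwa [closure_closure] at key

end Cone


/-- For a superadditive, linearly bounded `Φ` on an admissible graded subsemigroup `Γ`, the
Chebyshev function `G_Φ` takes finite values (the defining set is nonempty and bounded above)
and is concave on the interior of the Okounkov body `Δ(Γ)`. -/
theorem chebyshevFn_concaveOn
    (d : ℕ) (hd : 1 ≤ d) (Γ : Set (NPt d)) (hΓ : IsAdmissible Γ)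
    (Φ : NPt d → ℝ)
    (hsuper : ∀ x ∈ Γ, ∀ y ∈ Γ, Φ x + Φ y ≤ Φ (x + y))
    (hbdd : ∃ C : ℝ, 0 < C ∧ ∀ p ∈ Γ, |Φ p| ≤ C * p.1) :
    (∀ x ∈ interior (okounkovBody Γ),
      {t : ℝ | x ∈ okounkovBody (superlevel Γ Φ t)}.Nonempty ∧
      BddAbove {t : ℝ | x ∈ okounkovBody (superlevel Γ Φ t)}) ∧
    ConcaveOn ℝ (interior (okounkovBody Γ)) (chebyshevFn Γ Φ) := by
  obtain ⟨hΓsemi, ⟨Cg, hCg, hgrow⟩, -⟩ := hΓ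
  obtain ⟨C, hC, hΦb⟩ := hbdd
  have hne : ∀ x ∈ okounkovBody Γ, (-C) ∈ {t : ℝ | x ∈ okounkovBody (superlevel Γ Φ t)} := by
    intro x hx
    have hsub : Γ ⊆ superlevel Γ Φ (-C) := by
      intro p hp
      refine ⟨hp, ?_⟩
      have h1 := hΦb p hp
      have h2 : -(Φ p) ≤ |Φ p| := neg_le_abs _
      have h3 : (p.1 : ℝ) * (-C) = -(C * p.1) := by ring
      rw [h3]; linarith
    exact okounkovBody_mono hsub hx
  have hba : ∀ x : Fin d → ℝ, BddAbove {t : ℝ | x ∈ okounkovBody (superlevel Γ Φ t)} := by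
    intro x
    refine ⟨C, fun t ht => ?_⟩
    by_contra hCt
    push_neg at hCt
    have hzero : nptToReal '' superlevel Γ Φ t ⊆ {(0 : ℝ × (Fin d → ℝ))} := by
      rintro _ ⟨p, ⟨hpΓ, hpl⟩, rfl⟩
      have hp1 : p.1 = 0 := by
        by_contra h
        have h1 : (1 : ℝ) ≤ (p.1 : ℝ) := by exact_mod_cast Nat.one_le_iff_ne_zero.mpr h
        have h2 : Φ p ≤ C * p.1 := le_trans (le_abs_self _) (hΦb p hpΓ)
        nlinarith
      have hsum : ∑ i, ((p.2 i : ℝ)) ≤ 0 := by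
        have := hgrow p hpΓ
        rw [hp1] at this
        simpa using this
      have hnn : ∀ i ∈ Finset.univ, (0 : ℝ) ≤ (p.2 i : ℝ) := fun i _ => Nat.cast_nonneg _
      have hall := (Finset.sum_eq_zero_iff_of_nonneg hnn).mp
        (le_antisymm hsum (Finset.sum_nonneg hnn))
      show nptToReal p = 0
      refine Prod.ext ?_ ?_
      · show (p.1 : ℝ) = 0
        rw [hp1]; simp
      · funext i
        exact hall i (Finset.mem_univ i)
    have hcone : coneGen (nptToReal '' superlevel Γ Φ t) ⊆ {(0 : ℝ × (Fin d → ℝ))} := by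
      rintro _ ⟨n, c, p, hc, hp, rfl⟩
      have : ∀ i, p i = 0 := fun i => hzero (hp i)
      refine Set.mem_singleton_iff.mpr (Finset.sum_eq_zero fun i _ => ?_)
      rw [this i, smul_zero]
    have : ((1 : ℝ), x) ∈ ({(0 : ℝ × (Fin d → ℝ))} : Set _) := by
      have h0 := closure_mono hcone ht
      rwa [closure_singleton] at h0
    have h1 : (1 : ℝ) = 0 := congrArg Prod.fst (Set.mem_singleton_iff.mp this)
    exact one_ne_zero h1
  refine ⟨fun x hx => ⟨⟨-C, hne x (interior_subset hx)⟩, hba x⟩, ?_⟩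
  refine ⟨(convex_okounkovBody Γ).interior, ?_⟩
  intro x hx y hy a b ha hb hab
  simp only [smul_eq_mul]
  set Gx := chebyshevFn Γ Φ x with hGx
  set Gy := chebyshevFn Γ Φ y with hGy
  set Gz := chebyshevFn Γ Φ (a • x + b • y) with hGz
  have key : ∀ ε : ℝ, 0 < ε → a * Gx + b * Gy ≤ Gz + 2 * ε := by
    intro ε hε
    have hTx : {t : ℝ | x ∈ okounkovBody (superlevel Γ Φ t)}.Nonempty :=
      ⟨-C, hne x (interior_subset hx)⟩
    have hTy : {t : ℝ | y ∈ okounkovBody (superlevel Γ Φ t)}.Nonempty :=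
      ⟨-C, hne y (interior_subset hy)⟩
    obtain ⟨s, hsT, hs⟩ := exists_lt_of_lt_csSup hTx (sub_lt_self Gx hε)
    obtain ⟨t, htT, ht⟩ := exists_lt_of_lt_csSup hTy (sub_lt_self Gy hε)
    have hk := keyStep hΓsemi hsuper ha hb hab hsT htT hε
    have hmem : a * s + b * t - ε ∈
        {r : ℝ | (a • x + b • y) ∈ okounkovBody (superlevel Γ Φ r)} := hk
    have hle : a * s + b * t - ε ≤ Gz := le_csSup (hba _) hmem
    have e1 : a * Gx ≤ a * (s + ε) := mul_le_mul_of_nonneg_left (by linarith) ha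
    have e2 : b * Gy ≤ b * (t + ε) := mul_le_mul_of_nonneg_left (by linarith) hb
    nlinarith [e1, e2]
  by_contra hcon
  push_neg at hcon
  have hε : 0 < (a * Gx + b * Gy - Gz) / 4 := by linarith
  have := key _ hε
  linarith
end
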